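/- arXiv:2006.04735 — 5 statements merged into one kernel-verified Lean document; each statement's English description precedes it below -/
import Mathlib

section
/- Let 0 < μ ≤ 2L and ζ > 0 and consider the one-dimensional quadratics φ_1(u) = (L/2)u² + ζu and φ_2(u) = (μ/2)u² − ζu. Run deterministic two-machine Local SGD: starting from u_{0,0}^{(1)} = u_{0,0}^{(2)} = 0, in each of R rounds machine 1 performs K exact gradient steps u_{k+1,r}^{(1)} = u_{k,r}^{(1)} − η·(L·u_{k,r}^{(1)} + ζ) and machine 2 performs K steps u_{k+1,r}^{(2)} = u_{k,r}^{(2)} − η·(μ·u_{k,r}^{(2)} − ζ), after which both machines are reset to the average; let û denote the final average. Then if the fixed stepsize satisfies η ≤ 1/L and (1 − μη)^K ≤ (L − μ)/L, one has û ≥ (ζ/(2μ))·((L − μ)/L − (1 − μη)^K), and consequently ((L + μ)/4)·û² ≥ (ζ²(L + μ)/(16μ²))·((L − μ)/L − (1 − μη)^K)². -/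
set_option maxHeartbeats 2000000 in
/-- The fourth-coordinate lemma: deterministic two-machine Local SGD on the
one-dimensional quadratics `φ₁(u) = (L/2)u² + ζu` and `φ₂(u) = (μ/2)u² - ζu`, started at `0`,
with `K` local steps per round and `R` rounds, produces a final average `û` satisfying
`û ≥ (ζ/(2μ)) ((L-μ)/L - (1-μη)^K)` whenever `η ≤ 1/L` and `(1-μη)^K ≤ (L-μ)/L`, and
consequently `((L+μ)/4) û² ≥ (ζ²(L+μ)/(16μ²)) ((L-μ)/L - (1-μη)^K)²`. -/
theorem local_sgd_fourth_coordinate_lower_bound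
    (μ L ζ η : ℝ) (K R : ℕ)
    (hμ : 0 < μ) (hμL : μ ≤ 2 * L) (hζ : 0 < ζ) (hR : 1 ≤ R)
    (hη : η ≤ 1 / L)
    (hcontract : (1 - μ * η) ^ K ≤ (L - μ) / L)
    (v1 v2 : ℕ → ℕ → ℝ)
    (h10 : v1 0 0 = 0) (h20 : v2 0 0 = 0)
    (hrec1 : ∀ r k : ℕ, v1 r (k + 1) = v1 r k - η * (L * v1 r k + ζ))
    (hrec2 : ∀ r k : ℕ, v2 r (k + 1) = v2 r k - η * (μ * v2 r k - ζ))
    (hreset1 : ∀ r : ℕ, v1 (r + 1) 0 = (v1 r K + v2 r K) / 2)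
    (hreset2 : ∀ r : ℕ, v2 (r + 1) 0 = (v1 r K + v2 r K) / 2)
    (uhat : ℝ) (huhat : uhat = v1 R 0) :
    uhat ≥ (ζ / (2 * μ)) * ((L - μ) / L - (1 - μ * η) ^ K) ∧
      ((L + μ) / 4) * uhat ^ 2 ≥
        (ζ ^ 2 * (L + μ) / (16 * μ ^ 2)) * ((L - μ) / L - (1 - μ * η) ^ K) ^ 2 := by
  have hL : 0 < L := by linarith
  have hLne : L ≠ 0 := ne_of_gt hL
  have hμne : μ ≠ 0 := ne_of_gt hμ
  have hfrac : (L - μ) / L < 1 := by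
    rw [div_lt_one hL]; linarith
  have hKpos : K ≠ 0 := by
    intro h; rw [h, pow_zero] at hcontract; linarith
  have hηL : η * L ≤ 1 := (le_div_iff₀ hL).mp hη
  have hηpos : 0 < η := by
    by_contra h
    push_neg at h
    have h1 : (1:ℝ) ≤ 1 - μ * η := by nlinarith
    have h2 : (1:ℝ) ≤ (1 - μ * η) ^ K := one_le_pow₀ h1
    linarith
  have hA0 : 0 ≤ 1 - η * L := by linarith
  have hA1 : 1 - η * L ≤ 1 := by nlinarith
  have hB1 : 1 - μ * η ≤ 1 := by nlinarith
  have hBm : -1 ≤ 1 - μ * η := by nlinarith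
  have hα0 : 0 ≤ (1 - η * L) ^ K := pow_nonneg hA0 K
  have hαA : (1 - η * L) ^ K ≤ 1 - η * L := pow_le_of_le_one hA0 hA1 hKpos
  have habsB : |1 - μ * η| ≤ 1 := abs_le.mpr ⟨hBm, hB1⟩
  have hβabs : |(1 - μ * η) ^ K| ≤ |1 - μ * η| := by
    rw [abs_pow]
    exact pow_le_of_le_one (abs_nonneg _) habsB hKpos
  have hX0 : 0 ≤ (L - μ) / L - (1 - μ * η) ^ K := by linarith
  have hT0 : 0 ≤ ζ / (2 * μ) * ((L - μ) / L - (1 - μ * η) ^ K) :=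
    mul_nonneg (by positivity) hX0
  -- closed forms for local runs
  have hv1 : ∀ r k : ℕ, v1 r k = (1 - η * L) ^ k * (v1 r 0 + ζ / L) - ζ / L := by
    intro r k
    induction k with
    | zero => rw [pow_zero]; ring
    | succ k ih =>
      rw [hrec1 r k, ih]
      field_simp
      ring
  have hv2 : ∀ r k : ℕ, v2 r k = (1 - μ * η) ^ k * (v2 r 0 - ζ / μ) + ζ / μ := by
    intro r k
    induction k with
    | zero => rw [pow_zero]; ring
    | succ k ih =>
      rw [hrec2 r k, ih]
      field_simp
      ring
  have hv21 : ∀ r : ℕ, v2 r 0 = v1 r 0 := by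
    intro r
    cases r with
    | zero => rw [h10, h20]
    | succ r => rw [hreset1, hreset2]
  -- per-round recursion
  have hstep : ∀ r : ℕ, v1 (r + 1) 0 =
      (((1 - η * L) ^ K + (1 - μ * η) ^ K) * v1 r 0 + ζ * (1 - η * L) ^ K / L) / 2
        + ζ / (2 * μ) * ((L - μ) / L - (1 - μ * η) ^ K) := by
    intro r
    rw [hreset1 r, hv1 r K, hv2 r K, hv21 r]
    field_simp
    ring
  have hζαL : 0 ≤ ζ * (1 - η * L) ^ K / L := by positivity
  have hmain : uhat ≥ ζ / (2 * μ) * ((L - μ) / L - (1 - μ * η) ^ K) := by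
    rcases le_or_gt 0 ((1 - η * L) ^ K + (1 - μ * η) ^ K) with hs | hs
    · -- nonnegative contraction factor
      have hnn : ∀ r : ℕ, 0 ≤ v1 r 0 := by
        intro r
        induction r with
        | zero => rw [h10]
        | succ r ih =>
          rw [hstep r]
          have h3 : 0 ≤ ((1 - η * L) ^ K + (1 - μ * η) ^ K) * v1 r 0 := mul_nonneg hs ih
          linarith
      obtain ⟨R', rfl⟩ : ∃ R', R = R' + 1 := ⟨R - 1, (Nat.succ_pred_eq_of_pos hR).symm⟩
      rw [huhat, hstep R']
      have h3 : 0 ≤ ((1 - η * L) ^ K + (1 - μ * η) ^ K) * v1 R' 0 := mul_nonneg hs (hnn R')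
      linarith
    · -- negative contraction factor: everything degenerates to 0
      have hβneg : (1 - μ * η) ^ K < 0 := by linarith
      have hBneg : 1 - μ * η < 0 := by
        by_contra h
        push_neg at h
        exact absurd (pow_nonneg h K) (not_le.mpr hβneg)
      have hβlb : -((1 - μ * η) ^ K) ≤ μ * η - 1 := by
        have h1 : -((1 - μ * η) ^ K) ≤ |(1 - μ * η) ^ K| := neg_le_abs _
        have h2 : |1 - μ * η| = μ * η - 1 := by
          rw [abs_of_neg hBneg]; ring
        linarith
      -- L(1 - β) ≤ μ(1 - α)
      have hcle : L * (1 - (1 - μ * η) ^ K) ≤ μ * (1 - (1 - η * L) ^ K) := by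
        nlinarith [mul_le_mul_of_nonneg_left hβlb hL.le, mul_le_mul_of_nonneg_left hαA hμ.le]
      have hc' : (1 - (1 - μ * η) ^ K) / μ ≤ (1 - (1 - η * L) ^ K) / L :=
        (div_le_div_iff₀ hμ hL).mpr (by linarith)
      -- T + ζα/(2L) = c' ≤ 0, T ≥ 0, ζα/(2L) ≥ 0 forces T = 0, α = 0
      have hcT : ζ / 2 * ((1 - (1 - μ * η) ^ K) / μ - (1 - (1 - η * L) ^ K) / L)
          = ζ / (2 * μ) * ((L - μ) / L - (1 - μ * η) ^ K) + ζ * (1 - η * L) ^ K / (2 * L) := by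
        field_simp
        ring
      have hcle0 : ζ / 2 * ((1 - (1 - μ * η) ^ K) / μ - (1 - (1 - η * L) ^ K) / L) ≤ 0 :=
        mul_nonpos_of_nonneg_of_nonpos (by positivity) (by linarith)
      have hζαL2 : 0 ≤ ζ * (1 - η * L) ^ K / (2 * L) := by positivity
      have hTz : ζ / (2 * μ) * ((L - μ) / L - (1 - μ * η) ^ K) = 0 := by linarith
      have hαz' : ζ * (1 - η * L) ^ K / (2 * L) = 0 := by linarith
      have hαz : (1 - η * L) ^ K = 0 := by
        rw [div_eq_zero_iff] at hαz'
        rcases hαz' with h | h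
        · rcases mul_eq_zero.mp h with h' | h'
          · exact absurd h' (ne_of_gt hζ)
          · exact h'
        · exact absurd h (by positivity)
      have hzero : ∀ r : ℕ, v1 r 0 = 0 := by
        intro r
        induction r with
        | zero => exact h10
        | succ r ih =>
          rw [hstep r, ih, hαz, hTz]
          ring
      rw [huhat, hzero R, hTz]
  refine ⟨hmain, ?_⟩
  have hsq : (ζ / (2 * μ) * ((L - μ) / L - (1 - μ * η) ^ K)) ^ 2 ≤ uhat ^ 2 :=
    pow_le_pow_left₀ hT0 hmain 2
  have hid : ∀ X : ℝ, (ζ ^ 2 * (L + μ) / (16 * μ ^ 2)) * X ^ 2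
      = (L + μ) / 4 * (ζ / (2 * μ) * X) ^ 2 := by
    intro X
    field_simp
    ring
  rw [hid ((L - μ) / L - (1 - μ * η) ^ K)]
  exact mul_le_mul_of_nonneg_left hsq (by positivity)
end

section
/- Let 0 ≤ λ < H, let C and β be real constants, let d be even, and define F_1(x) = ((H−λ)/8)·(x_1² − 2Cx_1 + βx_d² + Σ_{i=1}^{d/2−1}(x_{2i+1} − x_{2i})²) + (λ/2)‖x‖² and F_2(x) = ((H−λ)/8)·Σ_{i=1}^{d/2}(x_{2i} − x_{2i−1})² + (λ/2)‖x‖² on R^d. Consider any distributed zero-respecting algorithm with two machines, where machine 1 queries exact gradients of F_1 and machine 2 queries exact gradients of F_2, initialized at 0. Then after R rounds of communication between the two machines, every query point on each machine, and hence the algorithm's output x̂, lies in E_R = span{e_1, …, e_R}, i.e. all coordinates beyond the R-th are zero. -/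
open Finset


noncomputable def cproj (d k : ℕ) : EuclideanSpace ℝ (Fin d) →L[ℝ] ℝ :=
  if h : k < d then EuclideanSpace.proj (⟨k, h⟩ : Fin d) else 0

lemma cproj_apply {d : ℕ} (k : ℕ) (x : EuclideanSpace ℝ (Fin d)) :
    cproj d k x = if h : k < d then x ⟨k, h⟩ else 0 := by
  unfold cproj; split <;> simp

lemma cproj_single {d : ℕ} (k : ℕ) (i : Fin d) :
    cproj d k (EuclideanSpace.single i (1:ℝ)) = if (i : ℕ) = k then 1 else 0 := by
  rw [cproj_apply]
  split
  · rename_i h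
    rw [EuclideanSpace.single_apply]
    congr 1
    simp [Fin.ext_iff, eq_comm]
  · rename_i h
    have : (i : ℕ) ≠ k := fun hh => h (hh ▸ i.isLt)
    simp [this]

lemma grad_coord {d : ℕ} (f : EuclideanSpace ℝ (Fin d) → ℝ) (x : EuclideanSpace ℝ (Fin d))
    (i : Fin d) : gradient f x i = fderiv ℝ f x (EuclideanSpace.single i 1) := by
  have h1 := EuclideanSpace.inner_single_right (𝕜 := ℝ) i 1 (gradient f x)
  unfold gradient at *
  simp at h1
  rw [← h1]

lemma grad1_zero {d : ℕ} (hd : Even d) (H lam C β : ℝ)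
    (coord : EuclideanSpace ℝ (Fin d) → ℕ → ℝ)
    (hcoord : ∀ (x : EuclideanSpace ℝ (Fin d)) (k : ℕ),
      coord x k = if h : k < d then x ⟨k, h⟩ else 0)
    (F₁ : EuclideanSpace ℝ (Fin d) → ℝ)
    (hF₁ : ∀ x, F₁ x = (H - lam) / 8 *
      ((coord x 0) ^ 2 - 2 * C * coord x 0 + β * (coord x (d - 1)) ^ 2 +
        ∑ i ∈ Finset.Icc 1 (d / 2 - 1), (coord x (2 * i) - coord x (2 * i - 1)) ^ 2) +
      lam / 2 * ‖x‖ ^ 2)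
    (x : EuclideanSpace ℝ (Fin d)) (k : ℕ) (hk : Odd k)
    (hx : ∀ j : Fin d, k ≤ (j : ℕ) → x j = 0)
    (i : Fin d) (hi : k ≤ (i : ℕ)) : gradient F₁ x i = 0 := by
  have hcp : ∀ (y : EuclideanSpace ℝ (Fin d)) (m : ℕ), coord y m = cproj d m y := by
    intro y m; rw [hcoord, cproj_apply]
  have hFe : F₁ = fun y => (H - lam) / 8 *
      (cproj d 0 y * cproj d 0 y - 2 * C * cproj d 0 y +
        β * (cproj d (d-1) y * cproj d (d-1) y) +
        ∑ j ∈ Finset.Icc 1 (d / 2 - 1),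
          (cproj d (2*j) y - cproj d (2*j-1) y) * (cproj d (2*j) y - cproj d (2*j-1) y)) +
      lam / 2 * ‖y‖ ^ 2 := by
    funext y; rw [hF₁]; simp only [hcp, pow_two]
  have hp : ∀ m, HasFDerivAt (fun y : EuclideanSpace ℝ (Fin d) => cproj d m y) (cproj d m) x :=
    fun m => (cproj d m).hasFDerivAt
  have hder := (((((hp 0).fun_mul (hp 0)).fun_sub ((hp 0).const_mul (2*C))).fun_add
        (((hp (d-1)).fun_mul (hp (d-1))).const_mul β)).fun_add
        (HasFDerivAt.fun_sum (u := Finset.Icc 1 (d/2-1))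
          (fun j _ => ((hp (2*j)).fun_sub (hp (2*j-1))).fun_mul ((hp (2*j)).fun_sub (hp (2*j-1)))))
        ).const_mul ((H - lam)/8) |>.fun_add
        ((hasStrictFDerivAt_norm_sq x).hasFDerivAt.const_mul (lam/2))
  rw [hFe, grad_coord, hder.fderiv]
  simp only [ContinuousLinearMap.add_apply, ContinuousLinearMap.smul_apply,
    ContinuousLinearMap.coe_sub', Pi.sub_apply, ContinuousLinearMap.coe_sum', Finset.sum_apply,
    smul_eq_mul, cproj_single, innerSL_apply_apply]
  have hd0 : 0 < d := i.pos
  have hk1 : 1 ≤ k := hk.pos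
  obtain ⟨mk, hmk⟩ := hk
  have hi0 : ¬((i : ℕ) = 0) := by omega
  have hxi : x i = 0 := hx i hi
  have hinner : (inner ℝ x (EuclideanSpace.single i (1:ℝ)) : ℝ) = 0 := by
    rw [EuclideanSpace.inner_single_right]; simp [hxi]
  have hlast : cproj d (d-1) x * (if (i:ℕ) = d - 1 then (1:ℝ) else 0) = 0 := by
    split
    · rename_i h
      rw [cproj_apply, dif_pos (by omega : d - 1 < d)]
      have : x ⟨d-1, by omega⟩ = x i := by rw [show (⟨d-1, by omega⟩ : Fin d) = i from Fin.ext h.symm]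
      rw [this, hxi]; ring
    · ring
  have hsum : ∀ j ∈ Finset.Icc 1 (d/2-1),
      (cproj d (2*j) x - cproj d (2*j-1) x) *
        ((if (i:ℕ) = 2*j then (1:ℝ) else 0) - (if (i:ℕ) = 2*j-1 then 1 else 0)) = 0 := by
    intro j hj
    simp only [Finset.mem_Icc] at hj
    obtain ⟨md2, hmd2⟩ := hd
    have h2j : 2*j < d := by omega
    have h2j1 : 2*j-1 < d := by omega
    have e1 : cproj d (2*j) x = 0 ∨ ¬((i:ℕ) = 2*j) := by
      by_cases h1 : (i:ℕ) = 2*j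
      · left; rw [cproj_apply, dif_pos h2j]; exact hx _ (by simpa using by omega)
      · right; exact h1
    by_cases h1 : (i:ℕ) = 2*j
    · have e1 : cproj d (2*j) x = 0 := by
        rw [cproj_apply, dif_pos h2j]; apply hx; show k ≤ 2*j; omega
      have e2 : cproj d (2*j-1) x = 0 := by
        rw [cproj_apply, dif_pos h2j1]; apply hx; show k ≤ 2*j-1; omega
      rw [e1, e2]; ring
    · by_cases h2 : (i:ℕ) = 2*j-1
      · have e1 : cproj d (2*j) x = 0 := by
          rw [cproj_apply, dif_pos h2j]; apply hx; show k ≤ 2*j; omega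
        have e2 : cproj d (2*j-1) x = 0 := by
          rw [cproj_apply, dif_pos h2j1]; apply hx; show k ≤ 2*j-1; omega
        rw [e1, e2]; ring
      · rw [if_neg h1, if_neg h2]; ring
  have hS : ∑ j ∈ Finset.Icc 1 (d/2-1),
      ((cproj d (2*j) x - cproj d (2*j-1) x) *
        ((if (i:ℕ) = 2*j then (1:ℝ) else 0) - (if (i:ℕ) = 2*j-1 then 1 else 0)) +
       (cproj d (2*j) x - cproj d (2*j-1) x) *
        ((if (i:ℕ) = 2*j then (1:ℝ) else 0) - (if (i:ℕ) = 2*j-1 then 1 else 0))) = 0 :=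
    Finset.sum_eq_zero fun j hj => by rw [hsum j hj]; ring
  rw [hS, hinner, hlast, if_neg hi0]
  ring

lemma grad2_zero {d : ℕ} (hd : Even d) (H lam C β : ℝ)
    (coord : EuclideanSpace ℝ (Fin d) → ℕ → ℝ)
    (hcoord : ∀ (x : EuclideanSpace ℝ (Fin d)) (k : ℕ),
      coord x k = if h : k < d then x ⟨k, h⟩ else 0)
    (F₂ : EuclideanSpace ℝ (Fin d) → ℝ)
    (hF₂ : ∀ x, F₂ x = (H - lam) / 8 *
      (∑ i ∈ Finset.Icc 1 (d / 2), (coord x (2 * i - 1) - coord x (2 * i - 2)) ^ 2) +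
      lam / 2 * ‖x‖ ^ 2)
    (x : EuclideanSpace ℝ (Fin d)) (k : ℕ) (hk : Even k)
    (hx : ∀ j : Fin d, k ≤ (j : ℕ) → x j = 0)
    (i : Fin d) (hi : k ≤ (i : ℕ)) : gradient F₂ x i = 0 := by
  have hcp : ∀ (y : EuclideanSpace ℝ (Fin d)) (m : ℕ), coord y m = cproj d m y := by
    intro y m; rw [hcoord, cproj_apply]
  have hFe : F₂ = fun y => (H - lam) / 8 *
      (∑ j ∈ Finset.Icc 1 (d / 2),
          (cproj d (2*j-1) y - cproj d (2*j-2) y) * (cproj d (2*j-1) y - cproj d (2*j-2) y)) +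
      lam / 2 * ‖y‖ ^ 2 := by
    funext y; rw [hF₂]; simp only [hcp, pow_two]
  have hp : ∀ m, HasFDerivAt (fun y : EuclideanSpace ℝ (Fin d) => cproj d m y) (cproj d m) x :=
    fun m => (cproj d m).hasFDerivAt
  have hder := (HasFDerivAt.fun_sum (u := Finset.Icc 1 (d/2))
          (fun j _ => ((hp (2*j-1)).fun_sub (hp (2*j-2))).fun_mul ((hp (2*j-1)).fun_sub (hp (2*j-2))))
        ).const_mul ((H - lam)/8) |>.fun_add
        ((hasStrictFDerivAt_norm_sq x).hasFDerivAt.const_mul (lam/2))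
  rw [hFe, grad_coord, hder.fderiv]
  simp only [ContinuousLinearMap.add_apply, ContinuousLinearMap.smul_apply,
    ContinuousLinearMap.coe_sub', Pi.sub_apply, ContinuousLinearMap.coe_sum', Finset.sum_apply,
    smul_eq_mul, cproj_single, innerSL_apply_apply]
  have hd0 : 0 < d := i.pos
  obtain ⟨mk, hmk⟩ := hk
  obtain ⟨md2, hmd2⟩ := hd
  have hxi : x i = 0 := hx i hi
  have hinner : (inner ℝ x (EuclideanSpace.single i (1:ℝ)) : ℝ) = 0 := by
    rw [EuclideanSpace.inner_single_right]; simp [hxi]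
  have hsum : ∀ j ∈ Finset.Icc 1 (d/2),
      (cproj d (2*j-1) x - cproj d (2*j-2) x) *
        ((if (i:ℕ) = 2*j-1 then (1:ℝ) else 0) - (if (i:ℕ) = 2*j-2 then 1 else 0)) = 0 := by
    intro j hj
    simp only [Finset.mem_Icc] at hj
    have h2j1 : 2*j-1 < d := by omega
    have h2j2 : 2*j-2 < d := by omega
    by_cases h1 : (i:ℕ) = 2*j-1
    · have e1 : cproj d (2*j-1) x = 0 := by
        rw [cproj_apply, dif_pos h2j1]; apply hx; show k ≤ 2*j-1; omega
      have e2 : cproj d (2*j-2) x = 0 := by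
        rw [cproj_apply, dif_pos h2j2]; apply hx; show k ≤ 2*j-2; omega
      rw [e1, e2]; ring
    · by_cases h2 : (i:ℕ) = 2*j-2
      · have e1 : cproj d (2*j-1) x = 0 := by
          rw [cproj_apply, dif_pos h2j1]; apply hx; show k ≤ 2*j-1; omega
        have e2 : cproj d (2*j-2) x = 0 := by
          rw [cproj_apply, dif_pos h2j2]; apply hx; show k ≤ 2*j-2; omega
        rw [e1, e2]; ring
      · rw [if_neg h1, if_neg h2]; ring
  have hS : ∑ j ∈ Finset.Icc 1 (d/2),
      ((cproj d (2*j-1) x - cproj d (2*j-2) x) *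
        ((if (i:ℕ) = 2*j-1 then (1:ℝ) else 0) - (if (i:ℕ) = 2*j-2 then 1 else 0)) +
       (cproj d (2*j-1) x - cproj d (2*j-2) x) *
        ((if (i:ℕ) = 2*j-1 then (1:ℝ) else 0) - (if (i:ℕ) = 2*j-2 then 1 else 0))) = 0 :=
    Finset.sum_eq_zero fun j hj => by rw [hsum j hj]; ring
  rw [hS, hinner]
  ring


/-- For the hard pair `F₁, F₂`, any distributed zero-respecting algorithm on
two machines (machine 1 querying exact gradients of `F₁`, machine 2 of `F₂`, communicating at
the ends of its `R` rounds), initialized at zero, has all query points and its output in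
`E_R = span{e₁, …, e_R}`: all coordinates beyond the `R`-th vanish. -/
theorem distributed_zero_respecting_span_lemma
    (d : ℕ) (hd : Even d)
    (H lam C β : ℝ) (hlam : 0 ≤ lam) (hH : lam < H)
    -- `coord x k` is the `(k+1)`-st coordinate of `x` (i.e. `x_{k+1}` in 1-indexed notation)
    (coord : EuclideanSpace ℝ (Fin d) → ℕ → ℝ)
    (hcoord : ∀ (x : EuclideanSpace ℝ (Fin d)) (k : ℕ),
      coord x k = if h : k < d then x ⟨k, h⟩ else 0)
    (F₁ F₂ : EuclideanSpace ℝ (Fin d) → ℝ)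
    (hF₁ : ∀ x, F₁ x = (H - lam) / 8 *
      ((coord x 0) ^ 2 - 2 * C * coord x 0 + β * (coord x (d - 1)) ^ 2 +
        ∑ i ∈ Finset.Icc 1 (d / 2 - 1), (coord x (2 * i) - coord x (2 * i - 1)) ^ 2) +
      lam / 2 * ‖x‖ ^ 2)
    (hF₂ : ∀ x, F₂ x = (H - lam) / 8 *
      (∑ i ∈ Finset.Icc 1 (d / 2), (coord x (2 * i - 1) - coord x (2 * i - 2)) ^ 2) +
      lam / 2 * ‖x‖ ^ 2)
    -- the algorithm: query points `x1 t`, `x2 t` (the `t`-th query on machines 1 and 2),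
    -- `round t` is the round during which the `t`-th query is made; there are `R` rounds
    (R : ℕ)
    (x1 x2 : ℕ → EuclideanSpace ℝ (Fin d))
    (xhat : EuclideanSpace ℝ (Fin d))
    (round : ℕ → ℕ) (hmono : Monotone round) (hround : ∀ t, round t < R)
    -- the algorithm is distributed zero-respecting: each machine's queries are supported on
    -- coordinates where a previously seen gradient (its own, or one communicated from the
    -- other machine at the end of a strictly earlier round) was nonzero
    (hZR1 : ∀ (t : ℕ) (i : Fin d), x1 t i ≠ 0 →
      (∃ s, s < t ∧ gradient F₁ (x1 s) i ≠ 0) ∨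
      (∃ s, round s < round t ∧ gradient F₂ (x2 s) i ≠ 0))
    (hZR2 : ∀ (t : ℕ) (i : Fin d), x2 t i ≠ 0 →
      (∃ s, s < t ∧ gradient F₂ (x2 s) i ≠ 0) ∨
      (∃ s, round s < round t ∧ gradient F₁ (x1 s) i ≠ 0))
    -- the output, produced after the `R`-th communication, is zero-respecting
    (hZRout : ∀ i : Fin d, xhat i ≠ 0 →
      (∃ s, gradient F₁ (x1 s) i ≠ 0) ∨ (∃ s, gradient F₂ (x2 s) i ≠ 0)) :
    (∀ (t : ℕ) (i : Fin d), R ≤ (i : ℕ) → x1 t i = 0 ∧ x2 t i = 0) ∧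
      (∀ i : Fin d, R ≤ (i : ℕ) → xhat i = 0) := by
  classical
  set A : ℕ → ℕ := fun r => if r % 2 = 0 then r + 1 else r with hA
  set B : ℕ → ℕ := fun r => if r % 2 = 0 then r else r + 1 with hB
  have hAodd : ∀ r, Odd (A r) := by
    intro r; rw [Nat.odd_iff, hA]; by_cases h : r % 2 = 0 <;> simp [h] <;> omega
  have hBeven : ∀ r, Even (B r) := by
    intro r; rw [Nat.even_iff, hB]; by_cases h : r % 2 = 0 <;> simp [h] <;> omega
  have hAbd : ∀ r, r ≤ A r ∧ A r ≤ r + 1 := by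
    intro r; rw [hA]; by_cases h : r % 2 = 0 <;> simp [h]
  have hBbd : ∀ r, r ≤ B r ∧ B r ≤ r + 1 := by
    intro r; rw [hB]; by_cases h : r % 2 = 0 <;> simp [h]
  have hAmono : ∀ {r r'}, r ≤ r' → A r ≤ A r' := by
    intro r r' h
    rcases eq_or_lt_of_le h with rfl | h
    · exact le_rfl
    · exact le_trans (hAbd r).2 (le_trans h (hAbd r').1)
  have hBmono : ∀ {r r'}, r ≤ r' → B r ≤ B r' := by
    intro r r' h
    rcases eq_or_lt_of_le h with rfl | h
    · exact le_rfl
    · exact le_trans (hBbd r).2 (le_trans h (hBbd r').1)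
  have key : ∀ t, (∀ i : Fin d, A (round t) ≤ (i : ℕ) → x1 t i = 0) ∧
      (∀ i : Fin d, B (round t) ≤ (i : ℕ) → x2 t i = 0) := by
    intro t
    induction t using Nat.strong_induction_on with
    | _ t IH =>
      constructor
      · intro i hi
        by_contra hne
        rcases hZR1 t i hne with ⟨s, hst, hg⟩ | ⟨s, hrs, hg⟩
        · exact hg (grad1_zero hd H lam C β coord hcoord F₁ hF₁ (x1 s) (A (round s))
            (hAodd _) (IH s hst).1 i (le_trans (hAmono (hmono hst.le)) hi))
        · have hst : s < t := by
            by_contra hts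
            exact absurd (hmono (not_lt.mp hts)) (not_le.mpr hrs)
          have hle : B (round s) ≤ (i : ℕ) :=
            le_trans (le_trans (hBbd (round s)).2 hrs) (le_trans (hAbd (round t)).1 hi)
          exact hg (grad2_zero hd H lam C β coord hcoord F₂ hF₂ (x2 s) (B (round s))
            (hBeven _) (IH s hst).2 i hle)
      · intro i hi
        by_contra hne
        rcases hZR2 t i hne with ⟨s, hst, hg⟩ | ⟨s, hrs, hg⟩
        · exact hg (grad2_zero hd H lam C β coord hcoord F₂ hF₂ (x2 s) (B (round s))
            (hBeven _) (IH s hst).2 i (le_trans (hBmono (hmono hst.le)) hi))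
        · have hst : s < t := by
            by_contra hts
            exact absurd (hmono (not_lt.mp hts)) (not_le.mpr hrs)
          have hle : A (round s) ≤ (i : ℕ) :=
            le_trans (le_trans (hAbd (round s)).2 hrs) (le_trans (hBbd (round t)).1 hi)
          exact hg (grad1_zero hd H lam C β coord hcoord F₁ hF₁ (x1 s) (A (round s))
            (hAodd _) (IH s hst).1 i hle)
  refine ⟨fun t i hi => ⟨?_, ?_⟩, fun i hi => ?_⟩
  · exact (key t).1 i (le_trans (le_trans (hAbd (round t)).2 (hround t)) hi)
  · exact (key t).2 i (le_trans (le_trans (hBbd (round t)).2 (hround t)) hi)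
  · by_contra hne
    rcases hZRout i hne with ⟨s, hg⟩ | ⟨s, hg⟩
    · exact hg (grad1_zero hd H lam C β coord hcoord F₁ hF₁ (x1 s) (A (round s))
        (hAodd _) (key s).1 i (le_trans (le_trans (hAbd (round s)).2 (hround s)) hi))
    · exact hg (grad2_zero hd H lam C β coord hcoord F₂ hF₂ (x2 s) (B (round s))
        (hBeven _) (key s).2 i (le_trans (le_trans (hBbd (round s)).2 (hround s)) hi))
end

section
/- Let 0 < λ < H, set α = sqrt(1 + (H−λ)/(2λ)), q = (α−1)/(α+1), and β = 1−q, let C ∈ R and let d ≥ 2 be even. Define F(x) = ((H−λ)/16)·(x_1² − 2Cx_1 + βx_d² + Σ_{i=2}^{d}(x_i − x_{i−1})²) + (λ/2)‖x‖² on R^d. Then the point x* = C·Σ_{i=1}^d q^i·e_i satisfies ∇F(x*) = 0 and is the (unique) minimizer of F; moreover F(x*) = −qC²(H−λ)/16, the initial suboptimality satisfies F(0) − F(x*) = qC²(H−λ)/16, and ‖x*‖² = C²q²(1−q^{2d})/(1−q²) ≤ αC²/4. -/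
open Finset

private lemma abel_key (σ : ℝ) (u b : ℕ → ℝ)
    (hb : ∀ k, b (k+2) - 2*b (k+1) + b k = σ * b (k+1)) (m : ℕ) :
    (∑ j ∈ Finset.range (m+1), (u (j+1) - u j) * (b (j+1) - b j))
      + σ * ∑ k ∈ Finset.range (m+2), u k * b k
    = u (m+1) * (b (m+1) - b m) + u 0 * (b 0 - b 1)
      + σ * (u 0 * b 0 + u (m+1) * b (m+1)) := by
  induction m with
  | zero => simp [Finset.sum_range_succ]; ring
  | succ n ih =>
      rw [Finset.sum_range_succ (fun j => (u (j+1) - u j) * (b (j+1) - b j)) (n+1),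
          Finset.sum_range_succ (fun k => u k * b k) (n+2)]
      linear_combination ih - u (n+1) * hb n

private lemma key_lemma (T σ C q β : ℝ)
    (hquad : (2 + σ) * q - q ^ 2 - 1 = 0) (hβ : β = 1 - q)
    (b : ℕ → ℝ) (hb : ∀ k, b k = C * q ^ (k+1)) (u : ℕ → ℝ) (m : ℕ) :
    T * (u 0 * b 0 + β * (u (m+1) * b (m+1))
        + ∑ j ∈ Finset.range (m+1), (u (j+1) - u j) * (b (j+1) - b j))
      + T * σ * ∑ k ∈ Finset.range (m+2), u k * b k
    = T * C * u 0 := by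
  have hb2 : ∀ k, b (k+2) - 2*b (k+1) + b k = σ * b (k+1) := by
    intro k
    simp only [hb]
    linear_combination (-(C * q ^ (k+1))) * hquad
  have h := abel_key σ u b hb2 m
  simp only [hb] at h ⊢
  subst hβ
  linear_combination T * h + T * (u 0) * C * hquad + T * (u (m+1)) * C * q^(m+1) * hquad

private lemma sum_sub_sq (S : Finset ℕ) (f g : ℕ → ℝ) :
    ∑ i ∈ S, (f i - g i)^2
      = ∑ i ∈ S, (f i)^2 - 2 * ∑ i ∈ S, f i * g i + ∑ i ∈ S, g i * g i := by
  rw [Finset.mul_sum, ← Finset.sum_sub_distrib, ← Finset.sum_add_distrib]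
  exact Finset.sum_congr rfl fun i _ => by ring

private lemma main_id (T σ C q β : ℝ)
    (hquad : (2 + σ) * q - q ^ 2 - 1 = 0) (hβ : β = 1 - q)
    (b : ℕ → ℝ) (hb : ∀ k, b k = C * q ^ (k+1)) (m : ℕ) (y : ℕ → ℝ) :
    T * ((y 0)^2 - 2*C*(y 0) + β*(y (m+1))^2
        + ∑ j ∈ Finset.range (m+1), (y (j+1) - y j)^2)
      + T * σ * ∑ k ∈ Finset.range (m+2), (y k)^2
    = T * ((y 0 - b 0)^2 + β*(y (m+1) - b (m+1))^2
        + ∑ j ∈ Finset.range (m+1), ((y (j+1) - b (j+1)) - (y j - b j))^2)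
      + T * σ * ∑ k ∈ Finset.range (m+2), (y k - b k)^2
      - T * q * C^2 := by
  have k1 := key_lemma T σ C q β hquad hβ b hb y m
  have k2 := key_lemma T σ C q β hquad hβ b hb b m
  have hb0 := hb 0
  have e1 := sum_sub_sq (Finset.range (m+1)) (fun j => y (j+1) - y j) (fun j => b (j+1) - b j)
  have e0 : ∑ j ∈ Finset.range (m+1), ((y (j+1) - b (j+1)) - (y j - b j))^2
      = ∑ j ∈ Finset.range (m+1), ((y (j+1) - y j) - (b (j+1) - b j))^2 :=
    Finset.sum_congr rfl fun j _ => by ring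
  rw [e0, e1, sum_sub_sq (Finset.range (m+2)) y b]
  linear_combination 2 * k1 - k2 - T * C * hb0

set_option maxHeartbeats 1000000 in
/-- For the hard quadratic `F`, the point `x⋆ = C Σ_i qⁱ e_i` is a critical
point and the unique minimizer of `F`, with `F(x⋆) = -qC²(H-λ)/16`,
`F(0) - F(x⋆) = qC²(H-λ)/16`, and `‖x⋆‖² = C²q²(1-q^{2d})/(1-q²) ≤ αC²/4`. -/
theorem hard_instance_minimizer
    (d : ℕ) (hd : Even d) (hd2 : 2 ≤ d)
    (H lam C : ℝ) (hlam : 0 < lam) (hH : lam < H)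
    (α q β : ℝ)
    (hα : α = Real.sqrt (1 + (H - lam) / (2 * lam)))
    (hq : q = (α - 1) / (α + 1))
    (hβ : β = 1 - q)
    -- `coord x k` is the `(k+1)`-st coordinate of `x` (i.e. `x_{k+1}` in 1-indexed notation)
    (coord : EuclideanSpace ℝ (Fin d) → ℕ → ℝ)
    (hcoord : ∀ (x : EuclideanSpace ℝ (Fin d)) (k : ℕ),
      coord x k = if h : k < d then x ⟨k, h⟩ else 0)
    (F : EuclideanSpace ℝ (Fin d) → ℝ)
    (hF : ∀ x, F x = (H - lam) / 16 *
      ((coord x 0) ^ 2 - 2 * C * coord x 0 + β * (coord x (d - 1)) ^ 2 +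
        ∑ i ∈ Finset.Icc 2 d, (coord x (i - 1) - coord x (i - 2)) ^ 2) +
      lam / 2 * ‖x‖ ^ 2)
    (xstar : EuclideanSpace ℝ (Fin d))
    (hxstar : ∀ i : Fin d, xstar i = C * q ^ ((i : ℕ) + 1)) :
    gradient F xstar = 0 ∧
      (∀ y, F xstar ≤ F y) ∧
      (∀ y, F y = F xstar → y = xstar) ∧
      F xstar = -(q * C ^ 2 * (H - lam)) / 16 ∧
      F 0 - F xstar = q * C ^ 2 * (H - lam) / 16 ∧
      ‖xstar‖ ^ 2 = C ^ 2 * q ^ 2 * (1 - q ^ (2 * d)) / (1 - q ^ 2) ∧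
      ‖xstar‖ ^ 2 ≤ α * C ^ 2 / 4 := by
  have hHl : 0 < H - lam := sub_pos.2 hH
  set T := (H - lam) / 16 with hT
  have hTpos : 0 < T := by positivity
  set σ := 8 * lam / (H - lam) with hσ
  have hσpos : 0 < σ := by positivity
  have hTσ : T * σ = lam / 2 := by rw [hT, hσ]; field_simp; ring
  -- α and q facts
  have hαsq : α ^ 2 = 1 + (H - lam) / (2 * lam) := by
    rw [hα, Real.sq_sqrt (by positivity)]
  have hα1 : 1 < α := by
    have h1 : (1:ℝ) < α ^ 2 := by
      rw [hαsq]; have : 0 < (H - lam) / (2 * lam) := by positivity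
      linarith
    nlinarith [Real.sqrt_nonneg (1 + (H - lam) / (2 * lam)), hα]
  have hq0 : 0 < q := by rw [hq]; apply div_pos <;> linarith
  have hq1 : q < 1 := by rw [hq, div_lt_one (by linarith)]; linarith
  have hquad : (2 + σ) * q - q ^ 2 - 1 = 0 := by
    have hne : α + 1 ≠ 0 := by positivity
    have h2 : q * (α + 1) = α - 1 := by rw [hq]; field_simp
    have hσα : σ * (α ^ 2 - 1) = 4 := by
      rw [hσ, hαsq]; field_simp; ring
    have h3 : ((2 + σ) * q - q ^ 2 - 1) * (α + 1)^2 = 0 := by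
      linear_combination hσα + ((2 + σ) * (α + 1) - (α - 1) - q * (α + 1)) * h2
    exact (mul_eq_zero.mp h3).resolve_right (pow_ne_zero _ hne)
  obtain ⟨m, rfl⟩ : ∃ m, d = m + 2 := ⟨d - 2, by omega⟩
  have hcoord' : ∀ (x : EuclideanSpace ℝ (Fin (m+2))) (k : ℕ) (h : k < m+2),
      coord x k = x ⟨k, h⟩ := fun x k h => by rw [hcoord]; exact dif_pos h
  have hxc : ∀ k, k < m+2 → coord xstar k = C * q ^ (k+1) := by
    intro k h
    rw [hcoord' xstar k h, hxstar]
  have hnorm : ∀ x : EuclideanSpace ℝ (Fin (m+2)),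
      ‖x‖^2 = ∑ k ∈ Finset.range (m+2), (coord x k)^2 := by
    intro x
    rw [EuclideanSpace.norm_eq, Real.sq_sqrt (by positivity),
      ← Fin.sum_univ_eq_sum_range (fun k => (coord x k)^2) (m+2)]
    refine Finset.sum_congr rfl fun i _ => ?_
    rw [Real.norm_eq_abs, sq_abs, hcoord' x i.val i.isLt]
  have hFy : ∀ x, F x = T * ((coord x 0)^2 - 2*C*(coord x 0) + β*(coord x (m+1))^2
        + ∑ j ∈ Finset.range (m+1), (coord x (j+1) - coord x j)^2)
      + T * σ * ∑ k ∈ Finset.range (m+2), (coord x k)^2 := by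
    intro x
    have hIcc : ∑ i ∈ Finset.Icc 2 (m+2), (coord x (i-1) - coord x (i-2))^2
        = ∑ j ∈ Finset.range (m+1), (coord x (j+1) - coord x j)^2 := by
      rw [← Finset.Ico_add_one_right_eq_Icc, Finset.sum_Ico_eq_sum_range]
      have h1 : m + 2 + 1 - 2 = m + 1 := by omega
      rw [h1]
      refine Finset.sum_congr rfl fun j _ => ?_
      have e1 : 2 + j - 1 = j + 1 := by omega
      have e2 : 2 + j - 2 = j := by omega
      rw [e1, e2]
    rw [hF, hIcc, hnorm x, ← hTσ]
    have h2 : m + 2 - 1 = m + 1 := by omega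
    rw [h2]
  have hmain : ∀ x, F x = T * ((coord x 0 - C*q^(0+1))^2
        + β*(coord x (m+1) - C*q^(m+1+1))^2
        + ∑ j ∈ Finset.range (m+1),
            ((coord x (j+1) - C*q^(j+1+1)) - (coord x j - C*q^(j+1)))^2)
      + T * σ * ∑ k ∈ Finset.range (m+2), (coord x k - C*q^(k+1))^2
      - T * q * C^2 := fun x =>
    (hFy x).trans (main_id T σ C q β hquad hβ (fun k => C*q^(k+1)) (fun k => rfl) m (coord x))
  have hFxstar : F xstar = -(T*q*C^2) := by
    rw [hmain xstar]
    have hz : ∀ k, k < m+2 → coord xstar k - C*q^(k+1) = 0 := fun k h => by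
      rw [hxc k h]; ring
    have hz1 : ∀ j ∈ Finset.range (m+1),
        ((coord xstar (j+1) - C*q^(j+1+1)) - (coord xstar j - C*q^(j+1)))^2 = 0 := by
      intro j hj
      have hj' := Finset.mem_range.1 hj
      rw [hz (j+1) (by omega), hz j (by omega)]; ring
    have hz2 : ∀ k ∈ Finset.range (m+2), (coord xstar k - C*q^(k+1))^2 = 0 := fun k hk => by
      rw [hz k (Finset.mem_range.1 hk)]; ring
    rw [Finset.sum_eq_zero hz1, Finset.sum_eq_zero hz2, hz 0 (by omega), hz (m+1) (by omega)]
    ring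
  have hβ0 : 0 ≤ β := by rw [hβ]; linarith
  have hβ1 : β ≤ 1 := by rw [hβ]; linarith
  have hdiff : ∀ x, F x - F xstar
      = T * ((coord x 0 - C*q^(0+1))^2 + β*(coord x (m+1) - C*q^(m+1+1))^2
          + ∑ j ∈ Finset.range (m+1),
              ((coord x (j+1) - C*q^(j+1+1)) - (coord x j - C*q^(j+1)))^2)
        + T * σ * ∑ k ∈ Finset.range (m+2), (coord x k - C*q^(k+1))^2 := by
    intro x; rw [hmain x, hFxstar]; ring
  have hGnn : ∀ x, 0 ≤ F x - F xstar := by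
    intro x
    rw [hdiff x]
    have s1 : 0 ≤ ∑ j ∈ Finset.range (m+1),
        ((coord x (j+1) - C*q^(j+1+1)) - (coord x j - C*q^(j+1)))^2 :=
      Finset.sum_nonneg fun _ _ => sq_nonneg _
    have s2 : 0 ≤ ∑ k ∈ Finset.range (m+2), (coord x k - C*q^(k+1))^2 :=
      Finset.sum_nonneg fun _ _ => sq_nonneg _
    have h1 : (0:ℝ) ≤ (coord x 0 - C*q^(0+1))^2 := sq_nonneg _
    have h2 : (0:ℝ) ≤ β*(coord x (m+1) - C*q^(m+1+1))^2 := mul_nonneg hβ0 (sq_nonneg _)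
    have h3 := mul_nonneg hTpos.le (by linarith :
      (0:ℝ) ≤ (coord x 0 - C*q^(0+1))^2 + β*(coord x (m+1) - C*q^(m+1+1))^2
        + ∑ j ∈ Finset.range (m+1),
            ((coord x (j+1) - C*q^(j+1+1)) - (coord x j - C*q^(j+1)))^2)
    have h4 := mul_nonneg (mul_nonneg hTpos.le hσpos.le) s2
    linarith
  have hmin : ∀ y, F xstar ≤ F y := fun y => by linarith [hGnn y]
  have hSnorm : ∀ x : EuclideanSpace ℝ (Fin (m+2)),
      ∑ k ∈ Finset.range (m+2), (coord x k - C*q^(k+1))^2 = ‖x - xstar‖^2 := by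
    intro x
    rw [hnorm (x - xstar)]
    refine Finset.sum_congr rfl fun k hk => ?_
    have hk' := Finset.mem_range.1 hk
    rw [hcoord' (x - xstar) k hk', hcoord' x k hk']
    have hsub : (x - xstar) ⟨k, hk'⟩ = x ⟨k, hk'⟩ - xstar ⟨k, hk'⟩ := rfl
    rw [hsub, hxstar ⟨k, hk'⟩]
  have hub : ∀ x, F x - F xstar
      ≤ (6*T + T*σ) * ∑ k ∈ Finset.range (m+2), (coord x k - C*q^(k+1))^2 := by
    intro x
    rw [hdiff x]
    set S := ∑ k ∈ Finset.range (m+2), (coord x k - C*q^(k+1))^2 with hSdef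
    have hS0 : 0 ≤ S := Finset.sum_nonneg fun _ _ => sq_nonneg _
    have h0 : (coord x 0 - C*q^(0+1))^2 ≤ S := by
      rw [hSdef]
      exact Finset.single_le_sum (f := fun k => (coord x k - C*q^(k+1))^2)
        (fun k _ => sq_nonneg _) (Finset.mem_range.2 (by omega))
    have hl : (coord x (m+1) - C*q^(m+1+1))^2 ≤ S := by
      rw [hSdef]
      exact Finset.single_le_sum (f := fun k => (coord x k - C*q^(k+1))^2)
        (fun k _ => sq_nonneg _) (Finset.mem_range.2 (by omega))
    have hs1 : ∑ j ∈ Finset.range (m+1), (coord x (j+1) - C*q^(j+1+1))^2 ≤ S := by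
      rw [hSdef]
      have hsplit := Finset.sum_range_succ' (fun k => (coord x k - C*q^(k+1))^2) (m+1)
      nlinarith [sq_nonneg (coord x 0 - C*q^(0+1))]
    have hs0 : ∑ j ∈ Finset.range (m+1), (coord x j - C*q^(j+1))^2 ≤ S := by
      rw [hSdef]
      exact Finset.sum_le_sum_of_subset_of_nonneg (Finset.range_subset_range.2 (by omega))
        (fun k _ _ => sq_nonneg _)
    have hΔ : ∑ j ∈ Finset.range (m+1),
        ((coord x (j+1) - C*q^(j+1+1)) - (coord x j - C*q^(j+1)))^2
        ≤ 2 * ∑ j ∈ Finset.range (m+1), (coord x (j+1) - C*q^(j+1+1))^2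
          + 2 * ∑ j ∈ Finset.range (m+1), (coord x j - C*q^(j+1))^2 := by
      have step1 : ∑ j ∈ Finset.range (m+1),
          ((coord x (j+1) - C*q^(j+1+1)) - (coord x j - C*q^(j+1)))^2
          ≤ ∑ j ∈ Finset.range (m+1),
            (2*(coord x (j+1) - C*q^(j+1+1))^2 + 2*(coord x j - C*q^(j+1))^2) := by
        refine Finset.sum_le_sum fun j _ => ?_
        nlinarith [sq_nonneg ((coord x (j+1) - C*q^(j+1+1)) + (coord x j - C*q^(j+1)))]
      have step2 : ∑ j ∈ Finset.range (m+1),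
          (2*(coord x (j+1) - C*q^(j+1+1))^2 + 2*(coord x j - C*q^(j+1))^2)
          = 2 * ∑ j ∈ Finset.range (m+1), (coord x (j+1) - C*q^(j+1+1))^2
            + 2 * ∑ j ∈ Finset.range (m+1), (coord x j - C*q^(j+1))^2 := by
        rw [Finset.sum_add_distrib, Finset.mul_sum, Finset.mul_sum]
      rw [← step2]
      exact step1
    have hβb : β*(coord x (m+1) - C*q^(m+1+1))^2 ≤ S := by
      calc β*(coord x (m+1) - C*q^(m+1+1))^2
          ≤ 1*(coord x (m+1) - C*q^(m+1+1))^2 :=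
            mul_le_mul_of_nonneg_right hβ1 (sq_nonneg _)
        _ ≤ S := by rw [one_mul]; exact hl
    have h6 : (coord x 0 - C*q^(0+1))^2 + β*(coord x (m+1) - C*q^(m+1+1))^2
        + ∑ j ∈ Finset.range (m+1),
            ((coord x (j+1) - C*q^(j+1+1)) - (coord x j - C*q^(j+1)))^2 ≤ 6*S := by
      linarith
    have h7 := mul_le_mul_of_nonneg_left h6 hTpos.le
    nlinarith [h7]
  have hKpos : (0:ℝ) < 6*T + T*σ := by positivity
  have hfd : HasFDerivAt F (0 : EuclideanSpace ℝ (Fin (m+2)) →L[ℝ] ℝ) xstar := by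
    refine HasFDerivAt.of_isLittleO ?_
    rw [Asymptotics.isLittleO_iff]
    intro c hc
    filter_upwards [Metric.ball_mem_nhds xstar (div_pos hc hKpos)] with y hy
    have hyd : ‖y - xstar‖ < c / (6*T + T*σ) := by
      rw [← dist_eq_norm]; exact Metric.mem_ball.1 hy
    have h1 : F y - F xstar ≤ (6*T + T*σ) * ‖y - xstar‖^2 := by
      rw [← hSnorm y]; exact hub y
    have h2 : 0 ≤ F y - F xstar := hGnn y
    have h3 : 0 ≤ ‖y - xstar‖ := norm_nonneg _
    simp only [ContinuousLinearMap.zero_apply, sub_zero, Real.norm_eq_abs]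
    rw [abs_of_nonneg h2]
    calc F y - F xstar ≤ (6*T+T*σ) * ‖y - xstar‖^2 := h1
      _ ≤ (6*T+T*σ) * ((c/(6*T+T*σ)) * ‖y - xstar‖) := by
          refine mul_le_mul_of_nonneg_left ?_ hKpos.le
          rw [pow_two]
          exact mul_le_mul_of_nonneg_right hyd.le h3
      _ = c * ‖y - xstar‖ := by field_simp
  have hgrad : gradient F xstar = 0 := by
    have h := hasFDerivAt_iff_hasGradientAt.mp hfd
    simpa using h.gradient
  have huniq : ∀ y, F y = F xstar → y = xstar := by
    intro y hy
    have h0 : F y - F xstar = 0 := by rw [hy]; ring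
    rw [hdiff y] at h0
    have s1 : 0 ≤ ∑ j ∈ Finset.range (m+1),
        ((coord y (j+1) - C*q^(j+1+1)) - (coord y j - C*q^(j+1)))^2 :=
      Finset.sum_nonneg fun _ _ => sq_nonneg _
    have s2 : 0 ≤ ∑ k ∈ Finset.range (m+2), (coord y k - C*q^(k+1))^2 :=
      Finset.sum_nonneg fun _ _ => sq_nonneg _
    have hTA : 0 ≤ T * ((coord y 0 - C*q^(0+1))^2 + β*(coord y (m+1) - C*q^(m+1+1))^2
        + ∑ j ∈ Finset.range (m+1),
            ((coord y (j+1) - C*q^(j+1+1)) - (coord y j - C*q^(j+1)))^2) :=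
      mul_nonneg hTpos.le (by
        have u1 : (0:ℝ) ≤ (coord y 0 - C*q^(0+1))^2 := sq_nonneg _
        have u2 : (0:ℝ) ≤ β*(coord y (m+1) - C*q^(m+1+1))^2 :=
          mul_nonneg hβ0 (sq_nonneg _)
        linarith)
    have hTs : 0 < T*σ := mul_pos hTpos hσpos
    have hSle : T*σ*(∑ k ∈ Finset.range (m+2), (coord y k - C*q^(k+1))^2) ≤ T*σ*0 := by
      rw [mul_zero]; linarith
    have hS0 : ∑ k ∈ Finset.range (m+2), (coord y k - C*q^(k+1))^2 = 0 :=
      le_antisymm (le_of_mul_le_mul_left hSle hTs) s2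
    have hterm := (Finset.sum_eq_zero_iff_of_nonneg (fun k _ => sq_nonneg _)).1 hS0
    have hcy : ∀ k, (hk : k < m+2) → y ⟨k, hk⟩ = C*q^(k+1) := by
      intro k hk
      have h1 := hterm k (Finset.mem_range.2 hk)
      have h2 : coord y k - C*q^(k+1) = 0 := by
        have := (pow_eq_zero_iff two_ne_zero).1 h1
        exact this
      rw [hcoord' y k hk] at h2
      linarith
    ext i
    rw [hxstar i]
    exact hcy i.val i.isLt
  have hq2lt : q^2 < 1 := by nlinarith
  have hq2ne : q^2 ≠ 1 := ne_of_lt hq2lt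
  have hnx : ‖xstar‖^2 = C^2*q^2*(1 - q^(2*(m+2)))/(1 - q^2) := by
    rw [hnorm xstar]
    have hc : ∀ k ∈ Finset.range (m+2), (coord xstar k)^2 = (C^2*q^2) * (q^2)^k :=
      fun k hk => by rw [hxc k (Finset.mem_range.1 hk)]; ring
    rw [Finset.sum_congr rfl hc, ← Finset.mul_sum, geom_sum_eq hq2ne (m+2),
      show ((q^2)^(m+2) = q^(2*(m+2))) from by rw [← pow_mul]]
    have hne1 : q^2 - 1 ≠ 0 := sub_ne_zero.2 hq2ne
    have hne2 : (1:ℝ) - q^2 ≠ 0 := sub_ne_zero.2 (Ne.symm hq2ne)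
    field_simp
    ring
  refine ⟨hgrad, hmin, huniq, ?_, ?_, hnx, ?_⟩
  · rw [hFxstar, hT]; ring
  · have hc0 : ∀ k, coord (0 : EuclideanSpace ℝ (Fin (m+2))) k = 0 := by
      intro k
      rw [hcoord]
      split <;> simp
    have hF0 : F 0 = 0 := by
      rw [hFy 0]
      simp [hc0]
    rw [hF0, hFxstar, hT]; ring
  · rw [hnx]
    rw [div_le_div_iff₀ (by linarith : (0:ℝ) < 1 - q^2) (by norm_num : (0:ℝ) < 4)]
    have hqα : q * (α + 1) = α - 1 := by
      rw [hq]; field_simp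
    have h4sq : (q*(α+1))^2 = (α-1)^2 := by rw [hqα]
    have e : (α*(1-q^2))*(α+1)^2 - 4*q^2*(α+1)^2 = 8*α - 4 := by
      linear_combination (-(α+4)) * h4sq
    have hpos : (0:ℝ) < (α+1)^2 := by positivity
    have hineq : 4*q^2 ≤ α*(1-q^2) := by nlinarith [e, hα1, hpos]
    have A1 : C^2*(4*q^2) ≤ C^2*(α*(1-q^2)) :=
      mul_le_mul_of_nonneg_left hineq (sq_nonneg C)
    have A2 : 0 ≤ C^2*q^2*q^(2*(m+2)) :=
      mul_nonneg (mul_nonneg (sq_nonneg C) (sq_nonneg q)) (pow_nonneg hq0.le _)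
    nlinarith [A1, A2]
end

section
/- Let 0 < λ < H, α = sqrt(1 + (H−λ)/(2λ)), q = (α−1)/(α+1), β = 1−q, C ∈ R, and d ≥ 2 even, and let F(x) = ((H−λ)/16)·(x_1² − 2Cx_1 + βx_d² + Σ_{i=2}^{d}(x_i − x_{i−1})²) + (λ/2)‖x‖² with minimizer x* = C·Σ_{i=1}^d q^i·e_i and F* = F(x*). Then for any R < d and any point x̂ ∈ E_R = span{e_1,…,e_R} (i.e. whose coordinates beyond the R-th vanish): F(x̂) − F* ≥ (λ/2)·‖x̂ − x*‖² ≥ (F(0) − F*)·(q^{2R} − q^{2d})/α. In particular, if d ≥ R + 1/(2·ln(1/q)), then F(x̂) − F* ≥ (F(0) − F*)·q^{2R}/(2α). -/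
open Finset

set_option maxHeartbeats 1000000 in
/-- Suboptimality of points supported on the first `R` coordinates for the
hard quadratic `F`: for any `x̂ ∈ E_R` with `R < d`,
`F(x̂) - F⋆ ≥ (λ/2)‖x̂ - x⋆‖² ≥ (F(0) - F⋆)(q^{2R} - q^{2d})/α`, and if
`d ≥ R + 1/(2 ln(1/q))` then `F(x̂) - F⋆ ≥ (F(0) - F⋆) q^{2R}/(2α)`. -/
theorem hard_instance_span_suboptimality
    (d : ℕ) (hd : Even d) (hd2 : 2 ≤ d)
    (H lam C : ℝ) (hlam : 0 < lam) (hH : lam < H)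
    (α q β : ℝ)
    (hα : α = Real.sqrt (1 + (H - lam) / (2 * lam)))
    (hq : q = (α - 1) / (α + 1))
    (hβ : β = 1 - q)
    (coord : EuclideanSpace ℝ (Fin d) → ℕ → ℝ)
    (hcoord : ∀ (x : EuclideanSpace ℝ (Fin d)) (k : ℕ),
      coord x k = if h : k < d then x ⟨k, h⟩ else 0)
    (F : EuclideanSpace ℝ (Fin d) → ℝ)
    (hF : ∀ x, F x = (H - lam) / 16 *
      ((coord x 0) ^ 2 - 2 * C * coord x 0 + β * (coord x (d - 1)) ^ 2 +
        ∑ i ∈ Finset.Icc 2 d, (coord x (i - 1) - coord x (i - 2)) ^ 2) +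
      lam / 2 * ‖x‖ ^ 2)
    (xstar : EuclideanSpace ℝ (Fin d))
    (hxstar : ∀ i : Fin d, xstar i = C * q ^ ((i : ℕ) + 1))
    (R : ℕ) (hR : R < d)
    (xhat : EuclideanSpace ℝ (Fin d))
    (hxhat : ∀ i : Fin d, R ≤ (i : ℕ) → xhat i = 0) :
    F xhat - F xstar ≥ lam / 2 * ‖xhat - xstar‖ ^ 2 ∧
      lam / 2 * ‖xhat - xstar‖ ^ 2 ≥ (F 0 - F xstar) * (q ^ (2 * R) - q ^ (2 * d)) / α ∧
      ((R : ℝ) + 1 / (2 * Real.log (1 / q)) ≤ d →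
        F xhat - F xstar ≥ (F 0 - F xstar) * q ^ (2 * R) / (2 * α)) := by
  subst hβ
  obtain ⟨e, rfl⟩ : ∃ e, d = e + 2 := ⟨d - 2, by omega⟩
  have hHl : 0 < H - lam := by linarith
  -- basic facts about α and q
  have hargpos : (0:ℝ) < 1 + (H - lam) / (2 * lam) := by positivity
  have hα2 : α ^ 2 = 1 + (H - lam) / (2 * lam) := by
    rw [hα]; exact Real.sq_sqrt hargpos.le
  have hα1 : 1 < α := by
    rw [hα]
    have : (1:ℝ) < 1 + (H - lam) / (2 * lam) := by
      have : 0 < (H - lam) / (2 * lam) := by positivity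
      linarith
    nlinarith [Real.sq_sqrt hargpos.le, Real.sqrt_nonneg (1 + (H - lam) / (2 * lam))]
  have hα0 : 0 < α := by linarith
  have hq0 : 0 < q := by rw [hq]; exact div_pos (by linarith) (by linarith)
  have hq1 : q < 1 := by
    rw [hq, div_lt_one (by linarith)]; linarith
  have h1q : 0 < 1 - q := by linarith
  have hαq : α * (1 - q) = 1 + q := by
    rw [hq]; field_simp; ring
  have hkey : (H - lam) * (1 - q) ^ 2 = 8 * lam * q := by
    have h2 : 2 * lam * α ^ 2 = 2 * lam + (H - lam) := by
      field_simp at hα2; linarith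
    rw [hq]; field_simp
    nlinarith [h2]
  set t := (H - lam) / 16 with ht
  have ht0 : 0 < t := by positivity
  have hkey' : 16 * t * (1 - q) ^ 2 = 8 * lam * q := by
    rw [ht]; field_simp; linarith [hkey]
  have hlq : lam = 2 * t * (1 - q) ^ 2 / q := by
    field_simp; linarith [hkey']
  have hq2ne : q ^ 2 ≠ 1 := by nlinarith
  have hq2ne' : q ^ 2 - 1 ≠ 0 := by nlinarith
  -- coordinates
  have hb : ∀ k, k < e + 2 → coord xstar k = C * q ^ (k + 1) := by
    intro k hk; rw [hcoord, dif_pos hk]; exact hxstar ⟨k, hk⟩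
  have hnorm : ∀ x : EuclideanSpace ℝ (Fin (e+2)), ‖x‖ ^ 2 = ∑ k ∈ range (e+2), (coord x k) ^ 2 := by
    intro x
    rw [EuclideanSpace.norm_eq, Real.sq_sqrt (by positivity),
      ← Fin.sum_univ_eq_sum_range (fun k => (coord x k) ^ 2)]
    refine Finset.sum_congr rfl fun i _ => ?_
    rw [hcoord, dif_pos i.isLt]
    simp [sq_abs]
  have hsub : ∀ (x : EuclideanSpace ℝ (Fin (e+2))) (k : ℕ),
      coord (x - xstar) k = coord x k - coord xstar k := by
    intro x k
    by_cases hk : k < e + 2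
    · simp only [hcoord, dif_pos hk]
      simp
    · simp only [hcoord, dif_neg hk]; ring
  -- rewrite F with range sums
  have hFx : ∀ x : EuclideanSpace ℝ (Fin (e+2)), F x = t *
      ((coord x 0) ^ 2 - 2 * C * coord x 0 + (1 - q) * (coord x (e+1)) ^ 2 +
        ∑ j ∈ range (e+1), (coord x (j+1) - coord x j) ^ 2) + lam / 2 * ‖x‖ ^ 2 := by
    intro x
    rw [hF x]
    have hIcc : ∑ i ∈ Finset.Icc 2 (e+2), (coord x (i-1) - coord x (i-2)) ^ 2
        = ∑ j ∈ range (e+1), (coord x (j+1) - coord x j) ^ 2 := by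
      rw [← Finset.Ico_add_one_right_eq_Icc, Finset.sum_Ico_eq_sum_range]
      refine Finset.sum_congr rfl fun j hj => ?_
      have h1 : 2 + j - 1 = j + 1 := by omega
      have h2 : 2 + j - 2 = j := by omega
      rw [h1, h2]
    have he1 : e + 2 - 1 = e + 1 := by omega
    rw [hIcc, he1]
  -- Key identity: F x - F xstar = t * S(x - xstar) + lam/2 ‖x - xstar‖²
  have hiden : ∀ x : EuclideanSpace ℝ (Fin (e+2)),
      F x - F xstar = t * ((coord x 0 - C * q) ^ 2
        + (1 - q) * (coord x (e+1) - C * q ^ (e+2)) ^ 2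
        + ∑ j ∈ range (e+1),
            ((coord x (j+1) - C * q ^ (j+2)) - (coord x j - C * q ^ (j+1))) ^ 2)
        + lam / 2 * ‖x - xstar‖ ^ 2 := by
    intro x
    set P := ∑ k ∈ range (e+2), (coord x k - C * q ^ (k+1)) * q ^ k with hP
    have hU1 : ∑ j ∈ range (e+1), (coord x (j+1) - C * q ^ (j+2)) * q ^ (j+1)
        = P - (coord x 0 - C * q) := by
      have h : ∑ k ∈ range (e+2), (coord x k - C * q ^ (k+1)) * q ^ k
          = (∑ j ∈ range (e+1), (coord x (j+1) - C * q ^ (j+2)) * q ^ (j+1))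
            + (coord x 0 - C * q ^ 1) * q ^ 0 :=
        Finset.sum_range_succ' (fun k => (coord x k - C * q ^ (k+1)) * q ^ k) (e+1)
      rw [hP]
      simp only [pow_zero, mul_one, pow_one] at h
      linarith [h]
    have hU2 : ∑ j ∈ range (e+1), (coord x j - C * q ^ (j+1)) * q ^ (j+1)
        = q * (P - (coord x (e+1) - C * q ^ (e+2)) * q ^ (e+1)) := by
      have h : ∑ k ∈ range (e+2), (coord x k - C * q ^ (k+1)) * q ^ k
          = (∑ k ∈ range (e+1), (coord x k - C * q ^ (k+1)) * q ^ k)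
            + (coord x (e+1) - C * q ^ (e+2)) * q ^ (e+1) :=
        Finset.sum_range_succ (fun k => (coord x k - C * q ^ (k+1)) * q ^ k) (e+1)
      have h2 : ∑ j ∈ range (e+1), (coord x j - C * q ^ (j+1)) * q ^ (j+1)
          = q * ∑ j ∈ range (e+1), (coord x j - C * q ^ (j+1)) * q ^ j := by
        rw [Finset.mul_sum]
        exact Finset.sum_congr rfl fun j _ => by ring
      rw [h2, hP]
      rw [h]
      ring
    have hT : ∑ j ∈ range (e+1),
          ((coord x (j+1) - C * q ^ (j+2)) - (coord x j - C * q ^ (j+1)))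
            * (C * q ^ (j+2) - C * q ^ (j+1))
        = C * (q - 1) * ((P - (coord x 0 - C * q))
            - q * (P - (coord x (e+1) - C * q ^ (e+2)) * q ^ (e+1))) := by
      have h1 : ∑ j ∈ range (e+1),
            ((coord x (j+1) - C * q ^ (j+2)) - (coord x j - C * q ^ (j+1)))
              * (C * q ^ (j+2) - C * q ^ (j+1))
          = C * (q - 1) * (∑ j ∈ range (e+1),
              ((coord x (j+1) - C * q ^ (j+2)) * q ^ (j+1)
               - (coord x j - C * q ^ (j+1)) * q ^ (j+1))) := by
        rw [Finset.mul_sum]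
        exact Finset.sum_congr rfl fun j _ => by ring
      rw [h1, Finset.sum_sub_distrib, hU1, hU2]
    have hW : ∑ k ∈ range (e+2), (coord x k - C * q ^ (k+1)) * (C * q ^ (k+1)) = C * q * P := by
      rw [hP, Finset.mul_sum]
      exact Finset.sum_congr rfl fun k _ => by ring
    rw [hFx x, hFx xstar, hnorm x, hnorm xstar, hnorm (x - xstar)]
    rw [hb 0 (by omega), hb (e+1) (by omega)]
    have e1 : ∑ k ∈ range (e+2), (coord (x - xstar) k) ^ 2
        = ∑ k ∈ range (e+2), (coord x k - C * q ^ (k+1)) ^ 2 :=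
      Finset.sum_congr rfl fun k hk => by
        rw [hsub, hb k (Finset.mem_range.mp hk)]
    have e2 : ∑ k ∈ range (e+2), (coord xstar k) ^ 2
        = ∑ k ∈ range (e+2), (C * q ^ (k+1)) ^ 2 :=
      Finset.sum_congr rfl fun k hk => by rw [hb k (Finset.mem_range.mp hk)]
    have e3 : ∑ j ∈ range (e+1), (coord xstar (j+1) - coord xstar j) ^ 2
        = ∑ j ∈ range (e+1), (C * q ^ (j+2) - C * q ^ (j+1)) ^ 2 :=
      Finset.sum_congr rfl fun j hj => by
        have hj' := Finset.mem_range.mp hj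
        rw [hb (j+1) (by omega), hb j (by omega)]
    rw [e1, e2, e3]
    have s1 : ∑ j ∈ range (e+1), (coord x (j+1) - coord x j) ^ 2
        = (∑ j ∈ range (e+1),
            ((coord x (j+1) - C * q ^ (j+2)) - (coord x j - C * q ^ (j+1))) ^ 2)
          + 2 * (∑ j ∈ range (e+1),
              ((coord x (j+1) - C * q ^ (j+2)) - (coord x j - C * q ^ (j+1)))
                * (C * q ^ (j+2) - C * q ^ (j+1)))
          + ∑ j ∈ range (e+1), (C * q ^ (j+2) - C * q ^ (j+1)) ^ 2 := by
      rw [Finset.mul_sum, ← Finset.sum_add_distrib, ← Finset.sum_add_distrib]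
      exact Finset.sum_congr rfl fun j _ => by ring
    have n1 : ∑ k ∈ range (e+2), (coord x k) ^ 2
        = (∑ k ∈ range (e+2), (coord x k - C * q ^ (k+1)) ^ 2)
          + 2 * (∑ k ∈ range (e+2), (coord x k - C * q ^ (k+1)) * (C * q ^ (k+1)))
          + ∑ k ∈ range (e+2), (C * q ^ (k+1)) ^ 2 := by
      rw [Finset.mul_sum, ← Finset.sum_add_distrib, ← Finset.sum_add_distrib]
      exact Finset.sum_congr rfl fun k _ => by ring
    rw [s1, n1, hT, hW]
    rw [hlq]
    field_simp
    ring
  -- value of F at xstar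
  have hFstar : F xstar = -(t * q * C ^ 2) := by
    rw [hFx xstar, hnorm xstar]
    rw [hb 0 (by omega), hb (e+1) (by omega)]
    have e2 : ∑ k ∈ range (e+2), (coord xstar k) ^ 2
        = ∑ k ∈ range (e+2), (C * q ^ (k+1)) ^ 2 :=
      Finset.sum_congr rfl fun k hk => by rw [hb k (Finset.mem_range.mp hk)]
    have e3 : ∑ j ∈ range (e+1), (coord xstar (j+1) - coord xstar j) ^ 2
        = ∑ j ∈ range (e+1), (C * q ^ (j+2) - C * q ^ (j+1)) ^ 2 :=
      Finset.sum_congr rfl fun j hj => by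
        have hj' := Finset.mem_range.mp hj
        rw [hb (j+1) (by omega), hb j (by omega)]
    rw [e2, e3]
    have g1 : ∑ j ∈ range (e+1), (C * q ^ (j+2) - C * q ^ (j+1)) ^ 2
        = C ^ 2 * (q - 1) ^ 2 * q ^ 2 * (((q ^ 2) ^ (e+1) - 1) / (q ^ 2 - 1)) := by
      have h1 : ∑ j ∈ range (e+1), (C * q ^ (j+2) - C * q ^ (j+1)) ^ 2
          = C ^ 2 * (q - 1) ^ 2 * q ^ 2 * ∑ j ∈ range (e+1), (q ^ 2) ^ j := by
        rw [Finset.mul_sum]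
        exact Finset.sum_congr rfl fun j _ => by ring
      rw [h1, geom_sum_eq hq2ne]
    have g2 : ∑ k ∈ range (e+2), (C * q ^ (k+1)) ^ 2
        = C ^ 2 * q ^ 2 * (((q ^ 2) ^ (e+2) - 1) / (q ^ 2 - 1)) := by
      have h1 : ∑ k ∈ range (e+2), (C * q ^ (k+1)) ^ 2
          = C ^ 2 * q ^ 2 * ∑ k ∈ range (e+2), (q ^ 2) ^ k := by
        rw [Finset.mul_sum]
        exact Finset.sum_congr rfl fun k _ => by ring
      rw [h1, geom_sum_eq hq2ne]
    rw [g1, g2, hlq]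
    field_simp
    ring
  -- value of F at 0
  have hF0 : F 0 = 0 := by
    have hc0 : ∀ k, coord (0 : EuclideanSpace ℝ (Fin (e+2))) k = 0 := by
      intro k
      rw [hcoord]
      split <;> simp
    rw [hFx 0]
    simp [hc0]
  -- Part 1
  have part1 : F xhat - F xstar ≥ lam / 2 * ‖xhat - xstar‖ ^ 2 := by
    rw [hiden xhat]
    have hS : 0 ≤ (coord xhat 0 - C * q) ^ 2
        + (1 - q) * (coord xhat (e+1) - C * q ^ (e+2)) ^ 2
        + ∑ j ∈ range (e+1),
            ((coord xhat (j+1) - C * q ^ (j+2)) - (coord xhat j - C * q ^ (j+1))) ^ 2 := by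
      have h1 : (0:ℝ) ≤ ∑ j ∈ range (e+1),
          ((coord xhat (j+1) - C * q ^ (j+2)) - (coord xhat j - C * q ^ (j+1))) ^ 2 :=
        Finset.sum_nonneg fun j _ => sq_nonneg _
      nlinarith [sq_nonneg (coord xhat 0 - C * q), sq_nonneg (coord xhat (e+1) - C * q ^ (e+2))]
    nlinarith [mul_nonneg ht0.le hS]
  -- Part 2
  have hxhk : ∀ k, R ≤ k → k < e + 2 → coord xhat k = 0 := by
    intro k hk1 hk2
    rw [hcoord, dif_pos hk2]
    exact hxhat ⟨k, hk2⟩ hk1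
  have hnse : ‖xhat - xstar‖ ^ 2 = ∑ k ∈ range (e+2), (coord (xhat - xstar) k) ^ 2 :=
    hnorm _
  have hlow : ∑ k ∈ range (e+2), (coord (xhat - xstar) k) ^ 2
      ≥ C ^ 2 * q ^ 2 * (((q ^ 2) ^ (e+2) - (q ^ 2) ^ R) / (q ^ 2 - 1)) := by
    have hsubset : Finset.Ico R (e+2) ⊆ range (e+2) := by
      intro k hk
      simp only [Finset.mem_Ico] at hk
      exact Finset.mem_range.mpr hk.2
    have h1 : ∑ k ∈ Finset.Ico R (e+2), (coord (xhat - xstar) k) ^ 2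
        ≤ ∑ k ∈ range (e+2), (coord (xhat - xstar) k) ^ 2 :=
      Finset.sum_le_sum_of_subset_of_nonneg hsubset fun k _ _ => sq_nonneg _
    have h2 : ∑ k ∈ Finset.Ico R (e+2), (coord (xhat - xstar) k) ^ 2
        = C ^ 2 * q ^ 2 * (((q ^ 2) ^ (e+2) - (q ^ 2) ^ R) / (q ^ 2 - 1)) := by
      have h3 : ∑ k ∈ Finset.Ico R (e+2), (coord (xhat - xstar) k) ^ 2
          = C ^ 2 * q ^ 2 * ∑ k ∈ Finset.Ico R (e+2), (q ^ 2) ^ k := by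
        rw [Finset.mul_sum]
        refine Finset.sum_congr rfl fun k hk => ?_
        rw [Finset.mem_Ico] at hk
        rw [hsub, hb k hk.2, hxhk k hk.1 hk.2]
        ring
      rw [h3, geom_sum_Ico hq2ne (by omega)]
    linarith [h1, h2.symm]
  have hpow : ∀ m : ℕ, q ^ (2 * m) = (q ^ 2) ^ m := fun m => by
    rw [pow_mul]
  have part2 : lam / 2 * ‖xhat - xstar‖ ^ 2
      ≥ (F 0 - F xstar) * (q ^ (2 * R) - q ^ (2 * (e+2))) / α := by
    rw [hF0, hFstar, hnse]
    have heq : (0 - -(t * q * C ^ 2)) * (q ^ (2 * R) - q ^ (2 * (e+2))) / α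
        = lam / 2 * (C ^ 2 * q ^ 2 * (((q ^ 2) ^ (e+2) - (q ^ 2) ^ R) / (q ^ 2 - 1))) := by
      have hαv : α = (1 + q) / (1 - q) := by
        field_simp
        linarith [hαq]
      rw [hpow R, hpow (e+2), hlq, hαv]
      field_simp
      ring
    rw [heq]
    have := hlow
    nlinarith [hlow, hlam]
  refine ⟨part1, part2, ?_⟩
  -- Part 3
  intro hlog
  have hL : 0 < Real.log (1 / q) := by
    rw [one_div, Real.log_inv]
    have := Real.log_neg hq0 hq1
    linarith
  have hcast : ((e + 2 - R : ℕ) : ℝ) = (e + 2 : ℝ) - R := by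
    push_cast [Nat.cast_sub (by omega : R ≤ e + 2)]
    ring
  have hmL : 1 ≤ 2 * ((e + 2 - R : ℕ) : ℝ) * Real.log (1 / q) := by
    rw [hcast]
    have h1 : 1 / (2 * Real.log (1 / q)) ≤ (e + 2 : ℝ) - R := by
      push_cast at hlog
      linarith
    rw [div_le_iff₀ (by positivity)] at h1
    nlinarith [h1]
  have hqd : q ^ (2 * (e+2)) ≤ q ^ (2 * R) / 2 := by
    have hsplitpow : q ^ (2 * (e+2)) = q ^ (2 * R) * q ^ (2 * (e + 2 - R)) := by
      rw [← pow_add]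
      congr 1
      omega
    have hsmall : q ^ (2 * (e + 2 - R)) ≤ 1 / 2 := by
      have hqexp : q = Real.exp (Real.log q) := (Real.exp_log hq0).symm
      have h1 : q ^ (2 * (e + 2 - R)) = Real.exp ((2 * (e + 2 - R) : ℕ) * Real.log q) := by
        rw [Real.exp_nat_mul, ← hqexp]
      rw [h1]
      have h2 : ((2 * (e + 2 - R) : ℕ) : ℝ) * Real.log q ≤ -1 := by
        have hlogq : Real.log q = -Real.log (1 / q) := by
          rw [one_div, Real.log_inv]; ring
        rw [hlogq]
        push_cast
        nlinarith [hmL, hcast]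
      calc Real.exp ((2 * (e + 2 - R) : ℕ) * Real.log q) ≤ Real.exp (-1) :=
            Real.exp_le_exp.mpr h2
        _ ≤ 1 / 2 := by
            rw [Real.exp_neg]
            rw [inv_le_comm₀ (Real.exp_pos 1) (by norm_num)]
            have := Real.add_one_le_exp 1
            linarith
    calc q ^ (2 * (e+2)) = q ^ (2 * R) * q ^ (2 * (e + 2 - R)) := hsplitpow
      _ ≤ q ^ (2 * R) * (1 / 2) := by
          exact mul_le_mul_of_nonneg_left hsmall (by positivity)
      _ = q ^ (2 * R) / 2 := by ring
  have hstep : (F 0 - F xstar) * q ^ (2 * R) / (2 * α)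
      ≤ (F 0 - F xstar) * (q ^ (2 * R) - q ^ (2 * (e+2))) / α := by
    rw [hF0, hFstar]
    have hc : 0 ≤ t * q * C ^ 2 := by positivity
    rw [div_le_div_iff₀ (by positivity) hα0]
    nlinarith [mul_nonneg (mul_nonneg hc hα0.le)
      (by linarith [hqd] : (0:ℝ) ≤ q ^ (2 * R) - 2 * q ^ (2 * (e+2)))]
  have : lam / 2 * ‖xhat - xstar‖ ^ 2 ≥ (F 0 - F xstar) * q ^ (2 * R) / (2 * α) :=
    le_trans hstep part2
  linarith [part1, this]
end

section
/- Let 0 ≤ λ < H, α = sqrt(1 + (H−λ)/(2λ)) (for λ > 0), q = (α−1)/(α+1), β = 1−q, C ∈ R, and d ≥ 2 even. Define F_1(x) = ((H−λ)/8)·(x_1² − 2Cx_1 + βx_d² + Σ_{i=1}^{d/2−1}(x_{2i+1} − x_{2i})²) + (λ/2)‖x‖² and F_2(x) = ((H−λ)/8)·Σ_{i=1}^{d/2}(x_{2i} − x_{2i−1})² + (λ/2)‖x‖², and let x* = C·Σ_{i=1}^d q^i·e_i be the minimizer of F = (1/2)(F_1 + F_2). Then ‖∇F_1(x*)‖ =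 ‖∇F_2(x*)‖, and the heterogeneity satisfies (1/2)·(‖∇F_1(x*)‖² + ‖∇F_2(x*)‖²) ≤ ((H+3λ)²/16)·‖x*‖² ≤ αC²(H+3λ)²/64. -/
open Finset

set_option maxHeartbeats 1000000

theorem aux_hasGradientAt {d : ℕ} {f : EuclideanSpace ℝ (Fin d) → ℝ}
    {D : EuclideanSpace ℝ (Fin d) →L[ℝ] ℝ} {g x : EuclideanSpace ℝ (Fin d)}
    (h : HasFDerivAt f D x) (h2 : ∀ j, D (EuclideanSpace.single j 1) = g j) :
    HasGradientAt f g x := by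
  rw [hasGradientAt_iff_hasFDerivAt]
  refine h.congr_fderiv ?_
  apply ContinuousLinearMap.coe_injective
  apply (EuclideanSpace.basisFun (Fin d) ℝ).toBasis.ext
  intro j
  simp [EuclideanSpace.basisFun_apply, h2 j, EuclideanSpace.inner_single_right]

/-- Heterogeneity of the hard pair `F₁, F₂` at the minimizer
`x⋆ = C Σ_i qⁱ e_i` of `F = (F₁ + F₂)/2`: `‖∇F₁(x⋆)‖ = ‖∇F₂(x⋆)‖` and
`(1/2)(‖∇F₁(x⋆)‖² + ‖∇F₂(x⋆)‖²) ≤ ((H+3λ)²/16)‖x⋆‖² ≤ αC²(H+3λ)²/64`. -/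
theorem hard_instance_heterogeneity_bound
    (d : ℕ) (hd : Even d) (hd2 : 2 ≤ d)
    (H lam C : ℝ) (hlam : 0 < lam) (hH : lam < H)
    (α q β : ℝ)
    (hα : α = Real.sqrt (1 + (H - lam) / (2 * lam)))
    (hq : q = (α - 1) / (α + 1))
    (hβ : β = 1 - q)
    (coord : EuclideanSpace ℝ (Fin d) → ℕ → ℝ)
    (hcoord : ∀ (x : EuclideanSpace ℝ (Fin d)) (k : ℕ),
      coord x k = if h : k < d then x ⟨k, h⟩ else 0)
    (F₁ F₂ F : EuclideanSpace ℝ (Fin d) → ℝ)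
    (hF₁ : ∀ x, F₁ x = (H - lam) / 8 *
      ((coord x 0) ^ 2 - 2 * C * coord x 0 + β * (coord x (d - 1)) ^ 2 +
        ∑ i ∈ Finset.Icc 1 (d / 2 - 1), (coord x (2 * i) - coord x (2 * i - 1)) ^ 2) +
      lam / 2 * ‖x‖ ^ 2)
    (hF₂ : ∀ x, F₂ x = (H - lam) / 8 *
      (∑ i ∈ Finset.Icc 1 (d / 2), (coord x (2 * i - 1) - coord x (2 * i - 2)) ^ 2) +
      lam / 2 * ‖x‖ ^ 2)
    (hF : ∀ x, F x = (F₁ x + F₂ x) / 2)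
    (xstar : EuclideanSpace ℝ (Fin d))
    (hxstar : ∀ i : Fin d, xstar i = C * q ^ ((i : ℕ) + 1))
    (hmin : ∀ y, F xstar ≤ F y) :
    ‖gradient F₁ xstar‖ = ‖gradient F₂ xstar‖ ∧
      (1 / 2) * (‖gradient F₁ xstar‖ ^ 2 + ‖gradient F₂ xstar‖ ^ 2) ≤
        (H + 3 * lam) ^ 2 / 16 * ‖xstar‖ ^ 2 ∧
      (H + 3 * lam) ^ 2 / 16 * ‖xstar‖ ^ 2 ≤ α * C ^ 2 * (H + 3 * lam) ^ 2 / 64 := by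
  classical
  have hd0 : 0 < d := by omega
  have hdev : d % 2 = 0 := Nat.even_iff.mp hd
  -- scalar facts
  have harg : (1:ℝ) < 1 + (H - lam) / (2 * lam) := by
    have : 0 < (H - lam) / (2 * lam) := div_pos (by linarith) (by linarith)
    linarith
  have hα1 : 1 < α := by
    rw [hα]
    nlinarith [Real.sq_sqrt (by linarith : (0:ℝ) ≤ 1 + (H - lam) / (2 * lam)),
      Real.sqrt_nonneg (1 + (H - lam) / (2 * lam))]
  have hα2 : α ^ 2 = 1 + (H - lam) / (2 * lam) := by
    rw [hα]; exact Real.sq_sqrt (by linarith)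
  have hα2' : 2 * lam * α ^ 2 = H + lam := by
    rw [hα2]; field_simp; ring
  have hα0 : (0:ℝ) < α + 1 := by linarith
  have hq0 : 0 < q := by rw [hq]; exact div_pos (by linarith) hα0
  have hq1 : q < 1 := by rw [hq, div_lt_one hα0]; linarith
  have hαq : 1 + q = α * (1 - q) := by rw [hq]; field_simp; ring
  have h1 : (α + 1) * (1 - q) = 2 := by rw [hq]; field_simp; ring
  have h2 : (α + 1) * q = α - 1 := by rw [hq]; field_simp
  have key : (H - lam) * (1 - q) ^ 2 = 8 * lam * q := by
    apply mul_right_cancel₀ (pow_ne_zero 2 (ne_of_gt hα0))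
    linear_combination ((H-lam)*((1-q)*(α+1)+2))*h1 - (8*lam*(α+1))*h2 - 4*hα2'
  have idB : 2 * ((H - lam) / 8) * (1 - q) + lam = lam * α := by
    apply mul_right_cancel₀ (ne_of_gt hα0)
    linear_combination ((H-lam)/4)*h1 - hα2'/2
  have idA : 2 * ((H - lam) / 8) * (q - 1) + lam * q = -(q * (lam * α)) := by
    linear_combination (-q)*idB - key/4
  -- coordinates
  set ι : ℕ → Fin d := fun k => ⟨k % d, Nat.mod_lt _ hd0⟩ with hιdef
  have hιval : ∀ k, k < d → ((ι k : Fin d) : ℕ) = k := fun k hk => Nat.mod_eq_of_lt hk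
  have hcoord' : ∀ (x : EuclideanSpace ℝ (Fin d)) (k : ℕ) (hk : k < d),
      coord x k = x (ι k) := by
    intro x k hk
    rw [hcoord, dif_pos hk]
    refine congrArg x.ofLp ?_
    exact Fin.ext (hιval k hk).symm
  have hxι : ∀ k, k < d → xstar (ι k) = C * q ^ (k + 1) := by
    intro k hk
    rw [hxstar, hιval k hk]
  have hnormsq : ∀ x : EuclideanSpace ℝ (Fin d), ‖x‖ ^ 2 = ∑ k, (x k) ^ 2 := by
    intro x
    rw [EuclideanSpace.norm_eq, Real.sq_sqrt (by positivity)]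
    exact Finset.sum_congr rfl fun k _ => by rw [Real.norm_eq_abs, sq_abs]
  -- rewritten forms of F₁, F₂
  have hF₁' : F₁ = fun x : EuclideanSpace ℝ (Fin d) =>
      (H - lam) / 8 * ((x (ι 0) * x (ι 0) - 2 * C * x (ι 0) +
        β * (x (ι (d-1)) * x (ι (d-1))) +
        ∑ i ∈ Finset.Icc 1 (d / 2 - 1),
          (x (ι (2*i)) - x (ι (2*i-1))) * (x (ι (2*i)) - x (ι (2*i-1)))) ) +
      lam / 2 * ∑ k, x k * x k := by
    funext x
    rw [hF₁ x, hcoord' x 0 (by omega), hcoord' x (d-1) (by omega)]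
    have hs : ∑ i ∈ Finset.Icc 1 (d / 2 - 1), (coord x (2 * i) - coord x (2 * i - 1)) ^ 2
        = ∑ i ∈ Finset.Icc 1 (d / 2 - 1),
          (x (ι (2*i)) - x (ι (2*i-1))) * (x (ι (2*i)) - x (ι (2*i-1))) := by
      refine Finset.sum_congr rfl fun i hi => ?_
      simp only [Finset.mem_Icc] at hi
      rw [hcoord' x (2*i) (by omega), hcoord' x (2*i-1) (by omega), pow_two]
    have hn : ‖x‖ ^ 2 = ∑ k, x k * x k := by
      rw [hnormsq]; exact Finset.sum_congr rfl fun k _ => pow_two _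
    rw [hs, hn]; ring
  have hF₂' : F₂ = fun x : EuclideanSpace ℝ (Fin d) =>
      (H - lam) / 8 * (∑ i ∈ Finset.Icc 1 (d / 2),
          (x (ι (2*i-1)) - x (ι (2*i-2))) * (x (ι (2*i-1)) - x (ι (2*i-2)))) +
      lam / 2 * ∑ k, x k * x k := by
    funext x
    rw [hF₂ x]
    have hs : ∑ i ∈ Finset.Icc 1 (d / 2), (coord x (2 * i - 1) - coord x (2 * i - 2)) ^ 2
        = ∑ i ∈ Finset.Icc 1 (d / 2),
          (x (ι (2*i-1)) - x (ι (2*i-2))) * (x (ι (2*i-1)) - x (ι (2*i-2))) := by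
      refine Finset.sum_congr rfl fun i hi => ?_
      simp only [Finset.mem_Icc] at hi
      rw [hcoord' x (2*i-1) (by omega), hcoord' x (2*i-2) (by omega), pow_two]
    have hn : ‖x‖ ^ 2 = ∑ k, x k * x k := by
      rw [hnormsq]; exact Finset.sum_congr rfl fun k _ => pow_two _
    rw [hs, hn]
  -- the gradient vector
  set g1 : EuclideanSpace ℝ (Fin d) :=
    WithLp.toLp 2 (fun k : Fin d => (if Even (k:ℕ) then (-1:ℝ) else 1) * (C * q ^ ((k:ℕ)+1) * (lam * α)))
    with hg1def
  have hg1k : ∀ k : Fin d, g1 k = (if Even (k:ℕ) then (-1:ℝ) else 1) *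
      (C * q ^ ((k:ℕ)+1) * (lam * α)) := fun k => rfl
  -- derivative building blocks
  have hp : ∀ a : Fin d, HasFDerivAt (fun y : EuclideanSpace ℝ (Fin d) => y a)
      (EuclideanSpace.proj (𝕜 := ℝ) a) xstar :=
    fun a => (EuclideanSpace.proj (𝕜 := ℝ) a).hasFDerivAt
  -- indicator evaluation
  have hpa : ∀ (a : Fin d) (v : EuclideanSpace ℝ (Fin d)),
      EuclideanSpace.proj (𝕜 := ℝ) a v = v a := fun a v => rfl
  have hχ : ∀ (j : Fin d) (k : ℕ), k < d →
      (EuclideanSpace.single j (1:ℝ)) (ι k) = if k = (j:ℕ) then 1 else 0 := by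
    intro j k hk
    rw [EuclideanSpace.single_apply]
    by_cases h : k = (j:ℕ)
    · rw [if_pos, if_pos h]
      exact Fin.ext (by rw [hιval k hk, h])
    · rw [if_neg, if_neg h]
      intro hc
      exact h (by rw [← hιval k hk, hc])
  have hfd1 := ((((((hp (ι 0)).mul (hp (ι 0))).sub ((hp (ι 0)).const_mul (2*C))).add
          ((((hp (ι (d-1))).mul (hp (ι (d-1))))).const_mul β)).add
          (HasFDerivAt.sum (u := Finset.Icc 1 (d / 2 - 1)) (fun i _ =>
            (((hp (ι (2*i))).sub (hp (ι (2*i-1)))).mul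
              ((hp (ι (2*i))).sub (hp (ι (2*i-1)))))))).const_mul ((H - lam) / 8)).add
        ((HasFDerivAt.sum (u := (Finset.univ : Finset (Fin d)))
          (fun k _ => (hp k).mul (hp k))).const_mul (lam / 2))
  have hgrad1 : HasGradientAt F₁ g1 xstar := by
    rw [hF₁']
    refine aux_hasGradientAt (hfd1.congr_of_eventuallyEq (Filter.Eventually.of_forall fun y => ?_)) ?_
    · simp only [Pi.add_apply, Pi.mul_apply, Pi.sub_apply, Finset.sum_apply]
    intro j
    simp only [ContinuousLinearMap.add_apply, ContinuousLinearMap.smul_apply,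
      ContinuousLinearMap.sub_apply, ContinuousLinearMap.coe_sum', Finset.sum_apply,
      smul_eq_mul, hpa, Pi.sub_apply]
    have hjd : (j:ℕ) < d := j.isLt
    have hsum2 : ∑ k : Fin d, (xstar k * EuclideanSpace.single j (1:ℝ) k
        + xstar k * EuclideanSpace.single j (1:ℝ) k) = xstar j + xstar j := by
      simp [EuclideanSpace.single_apply, mul_ite, Finset.sum_add_distrib]
    rw [hsum2, hχ j 0 (by omega), hχ j (d-1) (by omega), hg1k j, hxstar j]
    rcases Nat.even_or_odd (j:ℕ) with hpar | hpar
    · have hpar' : (j:ℕ) % 2 = 0 := Nat.even_iff.mp hpar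
      rw [if_pos hpar]
      by_cases hj0 : (j:ℕ) = 0
      · have hz : (∑ i ∈ Finset.Icc 1 (d / 2 - 1),
          ((xstar (ι (2 * i)) - xstar (ι (2 * i - 1))) *
              (EuclideanSpace.single j 1 (ι (2 * i)) - EuclideanSpace.single j 1 (ι (2 * i - 1))) +
            (xstar (ι (2 * i)) - xstar (ι (2 * i - 1))) *
              (EuclideanSpace.single j 1 (ι (2 * i)) - EuclideanSpace.single j 1 (ι (2 * i - 1))))) = 0 := by
          refine Finset.sum_eq_zero fun i hi => ?_
          simp only [Finset.mem_Icc] at hi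
          rw [hχ j (2*i) (by omega), hχ j (2*i-1) (by omega),
            if_neg (show ¬(2*i = (j:ℕ)) by omega),
            if_neg (show ¬(2*i-1 = (j:ℕ)) by omega)]
          ring
        rw [hz, if_pos (show 0 = (j:ℕ) by omega),
          if_neg (show ¬(d - 1 = (j:ℕ)) by omega),
          hxι 0 (by omega), hj0]
        linear_combination C * idA
      · set i₀ := (j:ℕ)/2 with hi₀def
        have hmem : i₀ ∈ Finset.Icc 1 (d/2-1) := by
          simp only [Finset.mem_Icc]; omega
        have hone : (∑ i ∈ Finset.Icc 1 (d / 2 - 1),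
          ((xstar (ι (2 * i)) - xstar (ι (2 * i - 1))) *
              (EuclideanSpace.single j 1 (ι (2 * i)) - EuclideanSpace.single j 1 (ι (2 * i - 1))) +
            (xstar (ι (2 * i)) - xstar (ι (2 * i - 1))) *
              (EuclideanSpace.single j 1 (ι (2 * i)) - EuclideanSpace.single j 1 (ι (2 * i - 1))))) = ((xstar (ι (2 * i₀)) - xstar (ι (2 * i₀ - 1))) *
              (EuclideanSpace.single j 1 (ι (2 * i₀)) - EuclideanSpace.single j 1 (ι (2 * i₀ - 1))) +
            (xstar (ι (2 * i₀)) - xstar (ι (2 * i₀ - 1))) *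
              (EuclideanSpace.single j 1 (ι (2 * i₀)) - EuclideanSpace.single j 1 (ι (2 * i₀ - 1)))) := by
          refine Finset.sum_eq_single_of_mem _ hmem fun i hi hne => ?_
          simp only [Finset.mem_Icc] at hi
          rw [hχ j (2*i) (by omega), hχ j (2*i-1) (by omega),
            if_neg (show ¬(2*i = (j:ℕ)) by omega),
            if_neg (show ¬(2*i-1 = (j:ℕ)) by omega)]
          ring
        have e1 : 2 * i₀ = (j:ℕ) := by omega
        rw [hone, e1, hχ j (j:ℕ) hjd, hχ j ((j:ℕ)-1) (by omega),
          if_pos (rfl : (j:ℕ) = (j:ℕ)),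
          if_neg (show ¬((j:ℕ) - 1 = (j:ℕ)) by omega),
          if_neg (show ¬(0 = (j:ℕ)) by omega),
          if_neg (show ¬(d - 1 = (j:ℕ)) by omega), hxι (j:ℕ) hjd, hxι ((j:ℕ)-1) (by omega),
          (by omega : (j:ℕ) - 1 + 1 = (j:ℕ))]
        linear_combination (C * q ^ (j:ℕ)) * idA
    · have hpar' : (j:ℕ) % 2 = 1 := Nat.odd_iff.mp hpar
      rw [if_neg (show ¬ Even ((j:ℕ)) by simp [Nat.even_iff, hpar'])]
      by_cases hjd1 : (j:ℕ) = d - 1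
      · have hz : (∑ i ∈ Finset.Icc 1 (d / 2 - 1),
          ((xstar (ι (2 * i)) - xstar (ι (2 * i - 1))) *
              (EuclideanSpace.single j 1 (ι (2 * i)) - EuclideanSpace.single j 1 (ι (2 * i - 1))) +
            (xstar (ι (2 * i)) - xstar (ι (2 * i - 1))) *
              (EuclideanSpace.single j 1 (ι (2 * i)) - EuclideanSpace.single j 1 (ι (2 * i - 1))))) = 0 := by
          refine Finset.sum_eq_zero fun i hi => ?_
          simp only [Finset.mem_Icc] at hi
          rw [hχ j (2*i) (by omega), hχ j (2*i-1) (by omega),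
            if_neg (show ¬(2*i = (j:ℕ)) by omega),
            if_neg (show ¬(2*i-1 = (j:ℕ)) by omega)]
          ring
        rw [hz, if_neg (show ¬(0 = (j:ℕ)) by omega),
          if_pos (show d - 1 = (j:ℕ) by omega),
          hxι (d-1) (by omega), hβ, hjd1, (by omega : d - 1 + 1 = d)]
        linear_combination (C * q ^ d) * idB
      · set i₀ := ((j:ℕ)+1)/2 with hi₀def
        have hmem : i₀ ∈ Finset.Icc 1 (d/2-1) := by
          simp only [Finset.mem_Icc]; omega
        have hone : (∑ i ∈ Finset.Icc 1 (d / 2 - 1),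
          ((xstar (ι (2 * i)) - xstar (ι (2 * i - 1))) *
              (EuclideanSpace.single j 1 (ι (2 * i)) - EuclideanSpace.single j 1 (ι (2 * i - 1))) +
            (xstar (ι (2 * i)) - xstar (ι (2 * i - 1))) *
              (EuclideanSpace.single j 1 (ι (2 * i)) - EuclideanSpace.single j 1 (ι (2 * i - 1))))) = ((xstar (ι (2 * i₀)) - xstar (ι (2 * i₀ - 1))) *
              (EuclideanSpace.single j 1 (ι (2 * i₀)) - EuclideanSpace.single j 1 (ι (2 * i₀ - 1))) +
            (xstar (ι (2 * i₀)) - xstar (ι (2 * i₀ - 1))) *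
              (EuclideanSpace.single j 1 (ι (2 * i₀)) - EuclideanSpace.single j 1 (ι (2 * i₀ - 1)))) := by
          refine Finset.sum_eq_single_of_mem _ hmem fun i hi hne => ?_
          simp only [Finset.mem_Icc] at hi
          rw [hχ j (2*i) (by omega), hχ j (2*i-1) (by omega),
            if_neg (show ¬(2*i = (j:ℕ)) by omega),
            if_neg (show ¬(2*i-1 = (j:ℕ)) by omega)]
          ring
        have e1 : 2 * i₀ = (j:ℕ) + 1 := by omega
        rw [hone, e1, Nat.add_sub_cancel, hχ j ((j:ℕ)+1) (by omega),
          hχ j (j:ℕ) hjd,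
          if_neg (show ¬((j:ℕ) + 1 = (j:ℕ)) by omega),
          if_pos (rfl : (j:ℕ) = (j:ℕ)),
          if_neg (show ¬(0 = (j:ℕ)) by omega),
          if_neg (show ¬(d - 1 = (j:ℕ)) by omega),
          hxι ((j:ℕ)+1) (by omega), hxι (j:ℕ) hjd]
        linear_combination (C * q ^ ((j:ℕ)+1)) * idB
  have hfd2 := ((HasFDerivAt.sum (u := Finset.Icc 1 (d / 2)) (fun i _ =>
            (((hp (ι (2*i-1))).sub (hp (ι (2*i-2)))).mul
              ((hp (ι (2*i-1))).sub (hp (ι (2*i-2))))))).const_mul ((H - lam) / 8)).add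
        ((HasFDerivAt.sum (u := (Finset.univ : Finset (Fin d)))
          (fun k _ => (hp k).mul (hp k))).const_mul (lam / 2))
  have hgrad2 : HasGradientAt F₂ (-g1) xstar := by
    rw [hF₂']
    refine aux_hasGradientAt (hfd2.congr_of_eventuallyEq (Filter.Eventually.of_forall fun y => ?_)) ?_
    · simp only [Pi.add_apply, Pi.mul_apply, Pi.sub_apply, Finset.sum_apply]
    intro j
    simp only [ContinuousLinearMap.add_apply, ContinuousLinearMap.smul_apply,
      ContinuousLinearMap.sub_apply, ContinuousLinearMap.coe_sum', Finset.sum_apply,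
      smul_eq_mul, hpa, Pi.sub_apply]
    have hjd : (j:ℕ) < d := j.isLt
    have hng : (-g1) j = -(g1 j) := rfl
    have hsum2 : ∑ k : Fin d, (xstar k * EuclideanSpace.single j (1:ℝ) k
        + xstar k * EuclideanSpace.single j (1:ℝ) k) = xstar j + xstar j := by
      simp [EuclideanSpace.single_apply, mul_ite, Finset.sum_add_distrib]
    rw [hsum2, hng, hg1k j, hxstar j]
    rcases Nat.even_or_odd (j:ℕ) with hpar | hpar
    · have hpar' : (j:ℕ) % 2 = 0 := Nat.even_iff.mp hpar
      rw [if_pos hpar]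
      set i₀ := (j:ℕ)/2 + 1 with hi₀def
      have hmem : i₀ ∈ Finset.Icc 1 (d/2) := by
        simp only [Finset.mem_Icc]; omega
      have hone : (∑ i ∈ Finset.Icc 1 (d / 2),
          ((xstar (ι (2 * i - 1)) - xstar (ι (2 * i - 2))) *
              (EuclideanSpace.single j 1 (ι (2 * i - 1)) - EuclideanSpace.single j 1 (ι (2 * i - 2))) +
            (xstar (ι (2 * i - 1)) - xstar (ι (2 * i - 2))) *
              (EuclideanSpace.single j 1 (ι (2 * i - 1)) - EuclideanSpace.single j 1 (ι (2 * i - 2))))) = ((xstar (ι (2 * i₀ - 1)) - xstar (ι (2 * i₀ - 2))) *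
              (EuclideanSpace.single j 1 (ι (2 * i₀ - 1)) - EuclideanSpace.single j 1 (ι (2 * i₀ - 2))) +
            (xstar (ι (2 * i₀ - 1)) - xstar (ι (2 * i₀ - 2))) *
              (EuclideanSpace.single j 1 (ι (2 * i₀ - 1)) - EuclideanSpace.single j 1 (ι (2 * i₀ - 2)))) := by
        refine Finset.sum_eq_single_of_mem _ hmem fun i hi hne => ?_
        simp only [Finset.mem_Icc] at hi
        rw [hχ j (2*i-1) (by omega), hχ j (2*i-2) (by omega),
          if_neg (show ¬(2*i-1 = (j:ℕ)) by omega),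
          if_neg (show ¬(2*i-2 = (j:ℕ)) by omega)]
        ring
      have e1 : 2 * i₀ - 1 = (j:ℕ) + 1 := by omega
      have e2 : 2 * i₀ - 2 = (j:ℕ) := by omega
      rw [hone, e1, e2, hχ j ((j:ℕ)+1) (by omega), hχ j (j:ℕ) hjd,
        if_neg (show ¬((j:ℕ) + 1 = (j:ℕ)) by omega),
        if_pos (rfl : (j:ℕ) = (j:ℕ)),
        hxι ((j:ℕ)+1) (by omega), hxι (j:ℕ) hjd]
      linear_combination (C * q ^ ((j:ℕ)+1)) * idB
    · have hpar' : (j:ℕ) % 2 = 1 := Nat.odd_iff.mp hpar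
      rw [if_neg (show ¬ Even ((j:ℕ)) by simp [Nat.even_iff, hpar'])]
      set i₀ := ((j:ℕ)+1)/2 with hi₀def
      have hmem : i₀ ∈ Finset.Icc 1 (d/2) := by
        simp only [Finset.mem_Icc]; omega
      have hone : (∑ i ∈ Finset.Icc 1 (d / 2),
          ((xstar (ι (2 * i - 1)) - xstar (ι (2 * i - 2))) *
              (EuclideanSpace.single j 1 (ι (2 * i - 1)) - EuclideanSpace.single j 1 (ι (2 * i - 2))) +
            (xstar (ι (2 * i - 1)) - xstar (ι (2 * i - 2))) *
              (EuclideanSpace.single j 1 (ι (2 * i - 1)) - EuclideanSpace.single j 1 (ι (2 * i - 2))))) = ((xstar (ι (2 * i₀ - 1)) - xstar (ι (2 * i₀ - 2))) *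
              (EuclideanSpace.single j 1 (ι (2 * i₀ - 1)) - EuclideanSpace.single j 1 (ι (2 * i₀ - 2))) +
            (xstar (ι (2 * i₀ - 1)) - xstar (ι (2 * i₀ - 2))) *
              (EuclideanSpace.single j 1 (ι (2 * i₀ - 1)) - EuclideanSpace.single j 1 (ι (2 * i₀ - 2)))) := by
        refine Finset.sum_eq_single_of_mem _ hmem fun i hi hne => ?_
        simp only [Finset.mem_Icc] at hi
        rw [hχ j (2*i-1) (by omega), hχ j (2*i-2) (by omega),
          if_neg (show ¬(2*i-1 = (j:ℕ)) by omega),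
          if_neg (show ¬(2*i-2 = (j:ℕ)) by omega)]
        ring
      have e1 : 2 * i₀ - 1 = (j:ℕ) := by omega
      have e2 : 2 * i₀ - 2 = (j:ℕ) - 1 := by omega
      rw [hone, e1, e2, hχ j (j:ℕ) hjd, hχ j ((j:ℕ)-1) (by omega),
        if_pos (rfl : (j:ℕ) = (j:ℕ)),
        if_neg (show ¬((j:ℕ) - 1 = (j:ℕ)) by omega),
        hxι (j:ℕ) hjd, hxι ((j:ℕ)-1) (by omega),
        (by omega : (j:ℕ) - 1 + 1 = (j:ℕ))]
      linear_combination (C * q ^ (j:ℕ)) * idA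
  -- norms
  have hG1 : gradient F₁ xstar = g1 := hgrad1.gradient
  have hG2 : gradient F₂ xstar = -g1 := hgrad2.gradient
  have hg1norm : ‖g1‖ ^ 2 = (lam * α) ^ 2 * ‖xstar‖ ^ 2 := by
    rw [hnormsq, hnormsq, Finset.mul_sum]
    refine Finset.sum_congr rfl fun k _ => ?_
    rw [hg1k, hxstar]
    split_ifs <;> ring
  -- final computations
  have hB2 : (lam * α) ^ 2 = lam * (H + lam) / 2 := by nlinarith [hα2']
  have hB2le : (lam * α) ^ 2 ≤ (H + 3 * lam) ^ 2 / 16 := by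
    rw [hB2]; nlinarith [sq_nonneg (H - lam)]
  have hq2 : 4 * q ^ 2 ≤ α * (1 - q ^ 2) := by
    nlinarith [hαq, hq0, hq1, hα1]
  have hxsum : ‖xstar‖ ^ 2 = ∑ k ∈ Finset.range d, C^2*q^2*(q^2)^k := by
    rw [hnormsq, ← Fin.sum_univ_eq_sum_range (fun k => C^2*q^2*(q^2)^k) d]
    exact Finset.sum_congr rfl fun k _ => by rw [hxstar]; ring
  have hxsum' : ‖xstar‖ ^ 2 = C^2*q^2 * ∑ k ∈ Finset.range d, (q^2)^k := by
    rw [hxsum, Finset.mul_sum]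
  have hgeo := geom_sum_mul (q^2) d
  have h1q2 : (0:ℝ) < 1 - q^2 := by nlinarith
  have hS0 : (0:ℝ) ≤ ∑ k ∈ Finset.range d, (q^2)^k :=
    Finset.sum_nonneg fun k _ => by positivity
  have hSle : (∑ k ∈ Finset.range d, (q^2)^k) * (1 - q^2) ≤ 1 := by
    have he : (∑ k ∈ Finset.range d, (q^2)^k) * (1 - q^2) = 1 - (q^2)^d := by
      linear_combination -hgeo
    rw [he]
    nlinarith [pow_nonneg (sq_nonneg q) d]
  have hq2S : q^2 * (∑ k ∈ Finset.range d, (q^2)^k) ≤ α/4 := by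
    have hfin : q^2 * (∑ k ∈ Finset.range d, (q^2)^k) * (1-q^2) ≤ α/4 * (1-q^2) := by
      nlinarith [mul_le_mul_of_nonneg_left hSle (sq_nonneg q), hq2]
    exact le_of_mul_le_mul_right hfin h1q2
  have hxle : ‖xstar‖ ^ 2 ≤ α * C^2 / 4 := by
    rw [hxsum']
    nlinarith [mul_le_mul_of_nonneg_left hq2S (sq_nonneg C)]
  refine ⟨by rw [hG1, hG2, norm_neg], ?_, ?_⟩
  · rw [hG1, hG2, norm_neg]
    nlinarith [mul_le_mul_of_nonneg_right hB2le (sq_nonneg ‖xstar‖), hg1norm]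
  · calc (H + 3 * lam) ^ 2 / 16 * ‖xstar‖ ^ 2
        ≤ (H + 3 * lam) ^ 2 / 16 * (α * C^2 / 4) :=
          mul_le_mul_of_nonneg_left hxle (by positivity)
      _ = α * C ^ 2 * (H + 3 * lam) ^ 2 / 64 := by ring
end
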